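/- arXiv:1705.06892 — 6 statements merged into one kernel-verified Lean document; each statement's English description precedes it below -/
import Mathlib

section
/- Every generalized polyhedral convex set has only finitely many faces. -/
open Pointwise

/-- A generalized polyhedral convex set: the intersection of a closed affine
subspace with finitely many closed half-spaces given by continuous linear
functionals. -/
def IsGPCS {X : Type*} [AddCommGroup X] [Module ℝ X] [TopologicalSpace X]
    (D : Set X) : Prop :=
  ∃ (p : ℕ) (f : Fin p → (X →L[ℝ] ℝ)) (α : Fin p → ℝ)
    (x₀ : X) (W : Submodule ℝ X),
    IsClosed (x₀ +ᵥ (W : Set X)) ∧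
    D = {x ∈ x₀ +ᵥ (W : Set X) | ∀ i, f i x ≤ α i}

/-- A polyhedral convex set: a finite intersection of closed half-spaces. -/
def IsPCS {X : Type*} [AddCommGroup X] [Module ℝ X] [TopologicalSpace X]
    (D : Set X) : Prop :=
  ∃ (p : ℕ) (f : Fin p → (X →L[ℝ] ℝ)) (α : Fin p → ℝ),
    D = {x | ∀ i, f i x ≤ α i}

/-- `F` is a face of the convex set `C`. -/
def IsFaceOf {X : Type*} [AddCommGroup X] [Module ℝ X] (F C : Set X) : Prop :=
  Convex ℝ F ∧ F ⊆ C ∧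
    ∀ ⦃x y : X⦄, x ∈ C → y ∈ C → ∀ t : ℝ, 0 < t → t < 1 →
      (1 - t) • x + t • y ∈ F → x ∈ F ∧ y ∈ F

/-- In a convex set all of whose points satisfy the constraints `f i x ≤ α i`,
if each index in `s` has a point with strict inequality, there is a single point
strict for all of `s`. -/
lemma slack_point {X : Type*} [AddCommGroup X] [Module ℝ X] [TopologicalSpace X]
    {p : ℕ} (f : Fin p → (X →L[ℝ] ℝ)) (α : Fin p → ℝ) (F : Set X)
    (hconv : Convex ℝ F) (hle : ∀ x ∈ F, ∀ i, f i x ≤ α i)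
    (x0 : X) (hx0 : x0 ∈ F) (s : Finset (Fin p))
    (hs : ∀ i ∈ s, ∃ x ∈ F, f i x < α i) :
    ∃ x ∈ F, ∀ i ∈ s, f i x < α i := by
  induction s using Finset.induction_on with
  | empty => exact ⟨x0, hx0, by simp⟩
  | insert _ _ hj ih =>
    rename_i j s
    obtain ⟨xb, hxbF, hxb⟩ := ih (fun i hi => hs i (Finset.mem_insert_of_mem hi))
    obtain ⟨xj, hxjF, hxj⟩ := hs j (Finset.mem_insert_self j s)
    refine ⟨(1/2 : ℝ) • xb + (1/2 : ℝ) • xj,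
      hconv hxbF hxjF (by norm_num) (by norm_num) (by norm_num), ?_⟩
    intro i hi
    have hval : f i ((1/2 : ℝ) • xb + (1/2 : ℝ) • xj)
        = (1/2 : ℝ) * f i xb + (1/2 : ℝ) * f i xj := by
      simp [map_add, map_smul]
    rcases Finset.mem_insert.1 hi with rfl | hi
    · have h1 : f i xb ≤ α i := hle xb hxbF i
      rw [hval]; linarith
    · have h1 : f i xb < α i := hxb i hi
      have h2 : f i xj ≤ α i := hle xj hxjF i
      rw [hval]; linarith

/-- Every generalized polyhedral convex set has only finitely many faces. -/
theorem gpcs_finitely_many_faces {X : Type*} [AddCommGroup X] [Module ℝ X] [TopologicalSpace X]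
    [IsTopologicalAddGroup X] [ContinuousSMul ℝ X] [LocallyConvexSpace ℝ X] [T2Space X]
    (D : Set X) (hD : IsGPCS D) :
    {F : Set X | IsFaceOf F D}.Finite := by
  classical
  obtain ⟨p, f, α, x₀, W, _hcl, hDeq⟩ := hD
  set g : Set (Fin p) → Set X := fun I => {x ∈ D | ∀ i ∈ I, f i x = α i} with hg
  have hsub : {F : Set X | IsFaceOf F D} ⊆ insert ∅ (Set.range g) := by
    intro F hF
    obtain ⟨hconv, hFsub, hface⟩ := hF
    rcases eq_or_ne F ∅ with rfl | hne
    · exact Set.mem_insert _ _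
    obtain ⟨x0, hx0⟩ := Set.nonempty_iff_ne_empty.2 hne
    -- elements of F satisfy all constraints and lie in the affine set
    have hFleq : ∀ x ∈ F, ∀ i, f i x ≤ α i := by
      intro x hx i
      have := hFsub hx
      rw [hDeq] at this
      exact this.2 i
    have hFaff : ∀ x ∈ F, x ∈ x₀ +ᵥ (W : Set X) := by
      intro x hx
      have := hFsub hx
      rw [hDeq] at this
      exact this.1
    set I : Set (Fin p) := {i | ∀ x ∈ F, f i x = α i} with hI
    right
    refine ⟨I, ?_⟩
    -- get a point of F strict on all indices outside I
    have hslackhyp : ∀ i ∈ (Finset.univ.filter (fun i => i ∉ I)),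
        ∃ x ∈ F, f i x < α i := by
      intro i hi
      have hiI : i ∉ I := (Finset.mem_filter.1 hi).2
      simp only [hI, Set.mem_setOf_eq, not_forall] at hiI
      obtain ⟨x, hxF, hxne⟩ := hiI
      exact ⟨x, hxF, lt_of_le_of_ne (hFleq x hxF i) hxne⟩
    obtain ⟨xb, hxbF, hxb⟩ := slack_point f α F hconv hFleq x0 hx0 _ hslackhyp
    have hxbI : ∀ i ∉ I, f i xb < α i := by
      intro i hi
      exact hxb i (Finset.mem_filter.2 ⟨Finset.mem_univ i, hi⟩)
    -- show g I = F
    ext y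
    simp only [hg, Set.mem_setOf_eq]
    constructor
    · rintro ⟨hyD, hyeq⟩
      -- key step: push past y from xb, stay in D, then use face property
      set ε : Fin p → ℝ := fun i =>
        if f i y < f i xb then (α i - f i xb) / (f i xb - f i y) else 1 with hε
      have hεpos : ∀ i, 0 < ε i := by
        intro i
        rw [hε]
        dsimp only
        split_ifs with h
        · apply div_pos
          · by_cases hiI : i ∈ I
            · have h1 : f i xb = α i := hiI xb hxbF
              have h2 : f i y = α i := hyeq i hiI
              rw [h1, h2] at h; linarith
            · linarith [hxbI i hiI]
          · linarith
        · norm_num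
      set S : Finset ℝ := insert 1 (Finset.image ε Finset.univ) with hS
      have hSne : S.Nonempty := ⟨1, Finset.mem_insert_self _ _⟩
      set t : ℝ := S.min' hSne with ht
      have htpos : 0 < t := by
        have := S.min'_mem hSne
        rw [← ht] at this
        rcases Finset.mem_insert.1 this with h | h
        · rw [h]; norm_num
        · obtain ⟨i, _, hi⟩ := Finset.mem_image.1 h
          rw [← hi]; exact hεpos i
      have htle : ∀ i, t ≤ ε i := by
        intro i
        exact S.min'_le _ (Finset.mem_insert_of_mem (Finset.mem_image.2 ⟨i, Finset.mem_univ i, rfl⟩))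
      set z : X := xb + t • (xb - y) with hz
      have hzD : z ∈ D := by
        rw [hDeq]
        constructor
        · -- affine part
          have h1 : (-x₀) +ᵥ xb ∈ (W : Set X) := by
            have := hFaff xb hxbF
            rwa [Set.mem_vadd_set_iff_neg_vadd_mem] at this
          have h2 : (-x₀) +ᵥ y ∈ (W : Set X) := by
            have : y ∈ x₀ +ᵥ (W : Set X) := by rw [hDeq] at hyD; exact hyD.1
            rwa [Set.mem_vadd_set_iff_neg_vadd_mem] at this
          rw [Set.mem_vadd_set_iff_neg_vadd_mem]
          have : (-x₀) +ᵥ z = ((-x₀) +ᵥ xb) + t • (((-x₀) +ᵥ xb) - ((-x₀) +ᵥ y)) := by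
            simp only [vadd_eq_add, hz]
            module
          rw [this]
          exact W.add_mem h1 (W.smul_mem t (W.sub_mem h1 h2))
        · intro i
          have hfz : f i z = f i xb + t * (f i xb - f i y) := by
            simp [hz, map_add, map_smul, map_sub, mul_sub]
          rw [hfz]
          by_cases h : f i y < f i xb
          · have hd : 0 < f i xb - f i y := by linarith
            have : t ≤ (α i - f i xb) / (f i xb - f i y) := by
              have := htle i
              rw [hε] at this
              dsimp only at this
              rwa [if_pos h] at this
            have := (le_div_iff₀ hd).1 this
            linarith
          · have : f i xb - f i y ≤ 0 := by linarith [not_lt.1 h]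
            have hxble : f i xb ≤ α i := hFleq xb hxbF i
            nlinarith [htpos]
      -- face property with x = z, y = y, parameter t/(1+t)
      have h1t : (0:ℝ) < 1 + t := by linarith
      have hcomb : (1 - t/(1+t)) • z + (t/(1+t)) • y = xb := by
        rw [hz]
        match_scalars <;> field_simp <;> ring
      have := hface hzD hyD (t/(1+t)) (by positivity)
        (by rw [div_lt_one h1t]; linarith) (by rw [hcomb]; exact hxbF)
      exact this.2
    · intro hyF
      exact ⟨hFsub hyF, fun i hi => hi y hyF⟩
  exact Set.Finite.subset ((Set.finite_range g).insert ∅) hsub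
end

section
/- Every nonempty face of a generalized polyhedral convex set D is an exposed face, i.e., of the form argmin{⟨x*, x⟩ | x ∈ D} for some continuous linear functional x*. -/
open Pointwise

private lemma exists_pos_mul_le {ι : Type*} [DecidableEq ι] (s : Finset ι) (c δ : ι → ℝ)
    (hδ : ∀ i ∈ s, 0 < δ i) : ∃ t : ℝ, 0 < t ∧ ∀ i ∈ s, t * c i ≤ δ i := by
  induction s using Finset.induction with
  | empty => exact ⟨1, one_pos, by simp⟩
  | @insert a s ha ih =>
    obtain ⟨t, ht, hts⟩ := ih fun i hi => hδ i (Finset.mem_insert_of_mem hi)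
    have hδa := hδ a (Finset.mem_insert_self a s)
    have hca : (0:ℝ) < |c a| + 1 := by positivity
    refine ⟨min t (δ a / (|c a| + 1)), lt_min ht (by positivity), ?_⟩
    intro i hi
    have htpos : (0:ℝ) < min t (δ a / (|c a| + 1)) := lt_min ht (by positivity)
    rcases Finset.mem_insert.1 hi with rfl | hi
    · have h1 : min t (δ i / (|c i| + 1)) ≤ δ i / (|c i| + 1) := min_le_right _ _
      have h2 : min t (δ i / (|c i| + 1)) * (|c i| + 1) ≤ δ i := by
        rw [← le_div_iff₀ hca]; exact h1
      have h3 : c i ≤ |c i| := le_abs_self _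
      nlinarith [mul_le_mul_of_nonneg_left h3 htpos.le]
    · rcases le_or_gt 0 (c i) with h | h
      · calc min t (δ a / (|c a| + 1)) * c i ≤ t * c i :=
              mul_le_mul_of_nonneg_right (min_le_left _ _) h
          _ ≤ δ i := hts i hi
      · have hδi := hδ i (Finset.mem_insert_of_mem hi)
        nlinarith

/-- Every nonempty face of a generalized polyhedral convex set is an exposed face. -/
theorem gpcs_face_isExposed {X : Type*} [AddCommGroup X] [Module ℝ X] [TopologicalSpace X]
    [IsTopologicalAddGroup X] [ContinuousSMul ℝ X] [LocallyConvexSpace ℝ X] [T2Space X]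
    (D : Set X) (hD : IsGPCS D) (F : Set X) (hF : IsFaceOf F D) (hne : F.Nonempty) :
    ∃ g : X →L[ℝ] ℝ, F = {u ∈ D | ∀ v ∈ D, g u ≤ g v} := by
  classical
  obtain ⟨p, f, α, x₀, W, hcl, hDeq⟩ := hD
  obtain ⟨hFconv, hFD, hface⟩ := hF
  set I : Finset (Fin p) := Finset.univ.filter (fun i => ∀ x ∈ F, f i x = α i) with hIdef
  -- a point of F strict on all constraints outside I
  have key0 : ∀ s : Finset (Fin p), (∀ i ∈ s, i ∉ I) →
      ∃ x ∈ F, ∀ i ∈ s, f i x < α i := by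
    intro s
    induction s using Finset.induction with
    | empty => exact fun _ => ⟨hne.choose, hne.choose_spec, by simp⟩
    | @insert a s ha ih =>
      intro hs
      obtain ⟨x, hxF, hx⟩ := ih fun i hi => hs i (Finset.mem_insert_of_mem hi)
      have haI : a ∉ I := hs a (Finset.mem_insert_self a s)
      have hex : ∃ z ∈ F, f a z ≠ α a := by
        by_contra h
        push_neg at h
        exact haI (Finset.mem_filter.2 ⟨Finset.mem_univ a, h⟩)
      obtain ⟨z, hzF, hz⟩ := hex
      have hzD := hFD hzF; rw [hDeq] at hzD
      have hxD := hFD hxF; rw [hDeq] at hxD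
      have hza : f a z < α a := lt_of_le_of_ne (hzD.2 a) hz
      refine ⟨(1/2 : ℝ) • x + (1/2 : ℝ) • z,
        hFconv hxF hzF (by norm_num) (by norm_num) (by norm_num), ?_⟩
      intro i hi
      have hle : f i z ≤ α i := hzD.2 i
      have hle' : f i x ≤ α i := hxD.2 i
      rcases Finset.mem_insert.1 hi with rfl | hi
      · simp only [map_add, map_smul, smul_eq_mul]
        linarith
      · have := hx i hi
        simp only [map_add, map_smul, smul_eq_mul]
        linarith
  obtain ⟨xb, hxbF, hxb⟩ := key0 Iᶜ (fun i hi => Finset.mem_compl.1 hi)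
  have hxbD : xb ∈ D := hFD hxbF
  have hxbD' := hxbD; rw [hDeq] at hxbD'
  have hxbI : ∀ i ∈ I, f i xb = α i := fun i hi => (Finset.mem_filter.1 hi).2 xb hxbF
  -- key membership criterion: x ∈ D active on all of I implies x ∈ F
  have key : ∀ x ∈ D, (∀ i ∈ I, f i x = α i) → x ∈ F := by
    intro x hxD hxI
    have hxD' := hxD; rw [hDeq] at hxD'
    obtain ⟨t, ht, hts⟩ := exists_pos_mul_le Iᶜ (fun i => f i xb - f i x)
      (fun i => α i - f i xb) (fun i hi => sub_pos.2 (hxb i hi))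
    set y := xb + t • (xb - x) with hy
    have hyD : y ∈ D := by
      rw [hDeq]
      refine ⟨?_, ?_⟩
      · have h1 : -x₀ + xb ∈ W := by
          have := hxbD'.1
          rwa [Set.mem_vadd_set_iff_neg_vadd_mem] at this
        have h2 : -x₀ + x ∈ W := by
          have := hxD'.1
          rwa [Set.mem_vadd_set_iff_neg_vadd_mem] at this
        rw [Set.mem_vadd_set_iff_neg_vadd_mem]
        have heq : (-x₀) +ᵥ y = (-x₀ + xb) + t • ((-x₀ + xb) - (-x₀ + x)) := by
          simp only [vadd_eq_add, hy]; module
        rw [heq]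
        exact W.add_mem h1 (W.smul_mem t (W.sub_mem h1 h2))
      · intro i
        by_cases hiI : i ∈ I
        · have e1 := hxbI i hiI
          have e2 := hxI i hiI
          simp only [hy, map_add, map_smul, map_sub, smul_eq_mul]
          rw [e1, e2]; linarith
        · have := hts i (Finset.mem_compl.2 hiI)
          simp only [hy, map_add, map_smul, map_sub, smul_eq_mul]
          linarith
    have h1t : (0:ℝ) < 1 + t := by linarith
    have hinv : (0:ℝ) < (1 + t)⁻¹ := by positivity
    have hcomb : (1 - (1 + t)⁻¹) • x + (1 + t)⁻¹ • y = xb := by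
      simp only [hy]
      match_scalars <;> field_simp <;> ring
    have hlt1 : (1 + t)⁻¹ < 1 := by
      rw [inv_lt_one_iff₀]; right; linarith
    exact (hface hxD hyD ((1 + t)⁻¹) hinv hlt1 (by rw [hcomb]; exact hxbF)).1
  refine ⟨-(∑ i ∈ I, f i), ?_⟩
  have gval : ∀ w : X, (-(∑ i ∈ I, f i)) w = -∑ i ∈ I, f i w := by
    intro w
    simp [ContinuousLinearMap.neg_apply, ContinuousLinearMap.sum_apply]
  ext u
  simp only [Set.mem_setOf_eq, gval]
  constructor
  · intro huF
    refine ⟨hFD huF, fun v hv => ?_⟩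
    have huI : ∀ i ∈ I, f i u = α i := fun i hi => (Finset.mem_filter.1 hi).2 u huF
    have hvD := hv; rw [hDeq] at hvD
    have h1 : ∑ i ∈ I, f i u = ∑ i ∈ I, α i := Finset.sum_congr rfl huI
    have h2 : ∑ i ∈ I, f i v ≤ ∑ i ∈ I, α i :=
      Finset.sum_le_sum fun i _ => hvD.2 i
    linarith
  · rintro ⟨huD, hmin⟩
    refine key u huD ?_
    intro i hi
    have huD' := huD; rw [hDeq] at huD'
    have hle : ∀ j ∈ I, f j u ≤ α j := fun j _ => huD'.2 j
    have hb := hmin xb hxbD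
    have e : ∑ j ∈ I, f j xb = ∑ j ∈ I, α j := Finset.sum_congr rfl hxbI
    have hsum : ∑ j ∈ I, α j ≤ ∑ j ∈ I, f j u := by linarith
    by_contra hne'
    have hlt : f i u < α i := lt_of_le_of_ne (hle i hi) hne'
    have : ∑ j ∈ I, f j u < ∑ j ∈ I, α j := Finset.sum_lt_sum hle ⟨i, hi, hlt⟩
    linarith
end

section
/- Let D ⊆ X be a closed convex set with nonempty relative interior. If D has only finitely many faces, then D is a generalized polyhedral convex set. -/
open Pointwise

open Filter Topology Set

theorem my_extend {X : Type*} [AddCommGroup X] [Module ℝ X] [TopologicalSpace X]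
    [IsTopologicalAddGroup X] [ContinuousSMul ℝ X] [LocallyConvexSpace ℝ X]
    (W : Submodule ℝ X) (g : W →L[ℝ] ℝ) :
    ∃ f : X →L[ℝ] ℝ, ∀ w : W, f w = g w := by
  -- get a convex symmetric open nbhd C of 0 with g < 1 on W ∩ C
  have h1 : {w : W | g w < 1} ∈ 𝓝 (0 : W) := by
    have : IsOpen {w : W | g w < 1} := isOpen_lt g.continuous continuous_const
    exact this.mem_nhds (by simp)
  rw [nhds_induced (Subtype.val) (0 : W)] at h1
  obtain ⟨V, hV, hVsub⟩ := Filter.mem_comap.1 h1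
  obtain ⟨S, hS, hSconv, hSV⟩ :=
    (locallyConvexSpace_iff_exists_convex_subset_zero ℝ X).1 ‹_› V hV
  set C : Set X := interior S ∩ (-(interior S)) with hC
  have hCopen : IsOpen C := isOpen_interior.inter isOpen_interior.neg
  have hC0 : (0 : X) ∈ C := by
    constructor
    · exact mem_interior_iff_mem_nhds.2 hS
    · rw [Set.mem_neg, neg_zero]; exact mem_interior_iff_mem_nhds.2 hS
  have hCconv : Convex ℝ C := hSconv.interior.inter (hSconv.interior.neg)
  have hCsymm : ∀ x ∈ C, -x ∈ C := by
    rintro x ⟨h1x, h2x⟩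
    exact ⟨Set.mem_neg.1 h2x, by rwa [Set.mem_neg, neg_neg]⟩
  have hCV : C ⊆ V := fun x hx => hSV (interior_subset hx.1)
  have habs : Absorbent ℝ C := absorbent_nhds_zero (hCopen.mem_nhds hC0)
  set N : X → ℝ := gauge C with hN
  have hgN : ∀ w : W, g w ≤ N ↑w := by
    intro w
    refine le_csInf habs.gauge_set_nonempty ?_
    rintro r ⟨hr, hx⟩
    obtain ⟨c, hc, hrc⟩ := hx
    have hcv : r⁻¹ • (w : X) ∈ V := by
      have : r⁻¹ • (w : X) = c := by rw [← hrc]; rw [inv_smul_smul₀ hr.ne']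
      rw [this]; exact hCV hc
    have : g (r⁻¹ • w) < 1 := hVsub hcv
    rw [map_smul, smul_eq_mul] at this
    have := (inv_mul_lt_one₀ hr).1 this
    linarith [this]
  obtain ⟨h, heq, hle⟩ := exists_extension_of_le_sublinear ⟨W, (g : W →ₗ[ℝ] ℝ)⟩ N
    (fun c hc x => by rw [hN, gauge_smul_of_nonneg hc.le, smul_eq_mul])
    (fun x y => gauge_add_le hCconv habs x y) hgN
  have habs' : ∀ x, |h x| ≤ N x := by
    intro x
    rw [abs_le]
    refine ⟨?_, hle x⟩
    have := hle (-x)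
    rw [map_neg, hN, gauge_neg hCsymm] at this
    linarith
  have hNcont : ∀ ε > 0, ∀ᶠ x in 𝓝 (0 : X), |h x| < ε := by
    intro ε hε
    have hmem : (ε / 2) • C ∈ 𝓝 (0 : X) := by
      have : IsOpen ((ε / 2) • C) := hCopen.smul₀ (by positivity)
      refine this.mem_nhds ?_
      exact ⟨0, hC0, smul_zero _⟩
    filter_upwards [hmem] with x hx
    have : N x ≤ ε / 2 := gauge_le_of_mem (by positivity) hx
    calc |h x| ≤ N x := habs' x
      _ ≤ ε / 2 := this
      _ < ε := by linarith
  have hcont : Continuous h := by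
    have hca : ContinuousAt h 0 := by
      rw [ContinuousAt, map_zero, Metric.tendsto_nhds]
      intro ε hε
      filter_upwards [hNcont ε hε] with x hx
      simpa [Real.dist_eq] using hx
    exact continuous_of_continuousAt_zero (h.toAddMonoidHom) hca
  exact ⟨⟨h, hcont⟩, fun w => heq w⟩

theorem my_core {X : Type*} [AddCommGroup X] [Module ℝ X] [TopologicalSpace X]
    [IsTopologicalAddGroup X] [ContinuousSMul ℝ X]
    {D : Set X} (hconv : Convex ℝ D) (hclosed : IsClosed D) {xb : X}
    (hxb : xb ∈ interior D)
    (hfin : {F : Set X | IsFaceOf F D}.Finite) :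
    ∃ (p : ℕ) (f : Fin p → (X →L[ℝ] ℝ)) (α : Fin p → ℝ), D = {x | ∀ i, f i x ≤ α i} := by
  classical
  set 𝓕 : Set (Set X) := {F | IsFaceOf F D ∧ ∃ φ : (X →L[ℝ] ℝ) × ℝ,
    (∀ x ∈ D, φ.1 x ≤ φ.2) ∧ φ.1 xb < φ.2 ∧ F = {x ∈ D | φ.1 x = φ.2}} with h𝓕
  have hFfin : 𝓕.Finite := hfin.subset (fun F hF => hF.1)
  haveI : Fintype ↥𝓕 := hFfin.fintype
  set p := Fintype.card ↥𝓕 with hp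
  set e : Fin p ≃ ↥𝓕 := (Fintype.equivFin ↥𝓕).symm with he
  have hex : ∀ i : Fin p, ∃ φ : (X →L[ℝ] ℝ) × ℝ,
      (∀ x ∈ D, φ.1 x ≤ φ.2) ∧ φ.1 xb < φ.2 ∧ (e i : Set X) = {x ∈ D | φ.1 x = φ.2} :=
    fun i => (e i).2.2
  choose φ hφ1 hφ2 hφ3 using hex
  refine ⟨p, fun i => (φ i).1, fun i => (φ i).2, ?_⟩
  apply Set.Subset.antisymm
  · intro x hx i
    exact hφ1 i x hx
  · intro y hy
    by_contra hyD
    -- the segment from xb to y exits D at a non-interior point z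
    set ψ : ℝ → X := fun t => (1 - t) • xb + t • y with hψ
    have hψc : Continuous ψ := by fun_prop
    set S : Set ℝ := Set.Icc 0 1 ∩ ψ ⁻¹' D with hS
    have hScl : IsClosed S := isClosed_Icc.inter (hclosed.preimage hψc)
    have hS0 : (0 : ℝ) ∈ S := by
      refine ⟨by simp, ?_⟩
      show ψ 0 ∈ D
      simp only [hψ, sub_zero, one_smul, zero_smul, add_zero]
      exact interior_subset hxb
    have hSbdd : BddAbove S := ⟨1, fun t ht => ht.1.2⟩
    set ts : ℝ := sSup S with hts
    have htsS : ts ∈ S := hScl.csSup_mem ⟨0, hS0⟩ hSbdd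
    have hts0 : 0 ≤ ts := htsS.1.1
    have hts1 : ts < 1 := by
      rcases lt_or_eq_of_le htsS.1.2 with h | h
      · exact h
      · exfalso; apply hyD
        have : ψ ts ∈ D := htsS.2
        rw [h] at this
        simpa [hψ] using this
    set z : X := ψ ts with hz
    have hzD : z ∈ D := htsS.2
    have hzint : z ∉ interior D := by
      intro hzi
      have hnb : ψ ⁻¹' interior D ∈ 𝓝 ts :=
        hψc.continuousAt.preimage_mem_nhds (isOpen_interior.mem_nhds hzi)
      obtain ⟨ε, hε, hball⟩ := Metric.mem_nhds_iff.1 hnb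
      set t' : ℝ := min 1 (ts + min (ε / 2) ((1 - ts) / 2)) with ht'
      have hlt : ts < t' := by
        apply lt_min (by linarith)
        have : 0 < min (ε / 2) ((1 - ts) / 2) := lt_min (by linarith) (by linarith)
        linarith
      have ht'le : t' ≤ 1 := min_le_left _ _
      have ht'ball : t' ∈ Metric.ball ts ε := by
        rw [Metric.mem_ball, Real.dist_eq, abs_lt]
        constructor
        · linarith
        · have h1 : t' ≤ ts + min (ε / 2) ((1 - ts) / 2) := min_le_right _ _
          have h2 : min (ε / 2) ((1 - ts) / 2) ≤ ε / 2 := min_le_left _ _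
          linarith
      have : t' ∈ S := ⟨⟨by linarith, ht'le⟩, show ψ t' ∈ D from interior_subset (hball ht'ball)⟩
      exact absurd (le_csSup hSbdd this) (not_le.2 hlt)
    -- supporting functional at z
    obtain ⟨g, hg⟩ := geometric_hahn_banach_open_point hconv.interior isOpen_interior hzint
    have hgxb : g xb < g z := hg xb hxb
    have hgle : ∀ a ∈ D, g a ≤ g z := by
      intro a ha
      by_contra hga
      push_neg at hga
      set c : ℝ := g a - g z with hc
      set M : ℝ := g a - g xb with hM
      have hc0 : 0 < c := by simp [hc]; linarith
      have hcM : c < M := by simp [hc, hM]; linarith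
      have hM0 : 0 < M := lt_trans hc0 hcM
      set s : ℝ := 1 - c / (2 * M) with hs
      have hratio : 0 < c / (2 * M) := by positivity
      have hratio2 : c / (2 * M) < 1 := by
        rw [div_lt_one (by linarith)]; linarith
      have hwmem : (1 - s) • xb + s • a ∈ interior D :=
        hconv.combo_interior_closure_mem_interior hxb (subset_closure ha)
          (by simp [hs]; linarith) (by simp [hs]; linarith) (by ring)
      have hgw := hg _ hwmem
      rw [map_add, map_smul, map_smul, smul_eq_mul, smul_eq_mul] at hgw
      have hsval : (1 - s) * M = c / 2 := by
        rw [hs]; field_simp; ring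
      have hkey : (1 - s) * g xb + s * g a = g a - (1 - s) * M := by rw [hM]; ring
      rw [hkey, hsval] at hgw
      rw [hc] at hc0
      linarith
    -- the exposed face at z
    set F : Set X := {x ∈ D | g x = g z} with hF
    have hFface : IsFaceOf F D := by
      refine ⟨?_, fun x hx => hx.1, ?_⟩
      · intro u hu v hv a b ha hb hab
        refine ⟨hconv hu.1 hv.1 ha hb hab, ?_⟩
        rw [map_add, map_smul, map_smul, smul_eq_mul, smul_eq_mul, hu.2, hv.2,
          ← add_mul, hab, one_mul]
      · intro u v hu hv t ht0 ht1 hcomb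
        obtain ⟨hcD, hceq⟩ := hcomb
        rw [map_add, map_smul, map_smul, smul_eq_mul, smul_eq_mul] at hceq
        have h1 := hgle u hu
        have h2 := hgle v hv
        have h1t : (0:ℝ) < 1 - t := by linarith
        have e1 : (1 - t) * (g z - g u) + t * (g z - g v) = 0 := by linear_combination -hceq
        have tA : 0 ≤ (1 - t) * (g z - g u) := mul_nonneg h1t.le (by linarith)
        have tB : 0 ≤ t * (g z - g v) := mul_nonneg ht0.le (by linarith)
        have keyA : (1 - t) * (g z - g u) = 0 := by linarith
        have keyB : t * (g z - g v) = 0 := by linarith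
        have hgu : g u = g z := by
          rcases mul_eq_zero.1 keyA with h | h
          · linarith
          · linarith
        have hgv : g v = g z := by
          rcases mul_eq_zero.1 keyB with h | h
          · linarith
          · linarith
        exact ⟨⟨hu, hgu⟩, ⟨hv, hgv⟩⟩
    have hFmem : F ∈ 𝓕 := ⟨hFface, ⟨(g, g z), hgle, hgxb, rfl⟩⟩
    set i : Fin p := e.symm ⟨F, hFmem⟩ with hi
    have hei : (e i : Set X) = F := by rw [hi, Equiv.apply_symm_apply]
    have hzF : z ∈ F := ⟨hzD, rfl⟩
    have hspec3 := hφ3 i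
    rw [hei] at hspec3
    have hziF : z ∈ {x ∈ D | (φ i).1 x = (φ i).2} := by rw [← hspec3]; exact hzF
    have hfz : (φ i).1 z = (φ i).2 := hziF.2
    have hfxb : (φ i).1 xb < (φ i).2 := hφ2 i
    have hfy : (φ i).1 y ≤ (φ i).2 := hy i
    have hcalc : (φ i).1 z = (1 - ts) * (φ i).1 xb + ts * (φ i).1 y := by
      rw [hz, hψ]
      simp [map_add, map_smul, smul_eq_mul]
    have h1t : (0:ℝ) < 1 - ts := by linarith
    have q1 : (1 - ts) * (φ i).1 xb < (1 - ts) * (φ i).2 := mul_lt_mul_of_pos_left hfxb h1t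
    have q2 : ts * (φ i).1 y ≤ ts * (φ i).2 := mul_le_mul_of_nonneg_left hfy hts0
    nlinarith [hcalc, hfz, q1, q2]

theorem combo_shift {X : Type*} [AddCommGroup X] [Module ℝ X] (a b : ℝ) (hab : a + b = 1)
    (xb u v : X) : xb + (a • u + b • v) = a • (xb + u) + b • (xb + v) := by
  have h : a • xb + b • xb = xb := by rw [← add_smul, hab, one_smul]
  calc xb + (a • u + b • v) = (a • xb + b • xb) + (a • u + b • v) := by rw [h]
    _ = a • (xb + u) + b • (xb + v) := by rw [smul_add, smul_add]; abel

theorem closure_vadd' {X : Type*} [AddCommGroup X] [TopologicalSpace X] [IsTopologicalAddGroup X]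
    (x : X) (s : Set X) : closure (x +ᵥ s) = x +ᵥ closure s := by
  have h := (Homeomorph.addLeft x).image_closure s
  simp only [Homeomorph.coe_addLeft] at h
  rw [← Set.image_vadd, ← Set.image_vadd] at *
  exact h.symm

/-- A closed convex set with nonempty relative interior and only finitely many
faces is a generalized polyhedral convex set. -/
theorem closed_convex_finitely_many_faces_isGPCS {X : Type*} [AddCommGroup X] [Module ℝ X] [TopologicalSpace X]
    [IsTopologicalAddGroup X] [ContinuousSMul ℝ X] [LocallyConvexSpace ℝ X] [T2Space X]
    (D : Set X) (hconv : Convex ℝ D) (hclosed : IsClosed D)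
    (hri : ∃ x ∈ D, ∃ U : Set X, IsOpen U ∧ x ∈ U ∧
      U ∩ closure ((affineSpan ℝ D : AffineSubspace ℝ X) : Set X) ⊆ D)
    (hfin : {F : Set X | IsFaceOf F D}.Finite) :
    IsGPCS D := by
  classical
  obtain ⟨xb, hxbD, U, hUopen, hxbU, hUsub⟩ := hri
  set M : AffineSubspace ℝ X := affineSpan ℝ D with hM
  have hxbM : xb ∈ M := subset_affineSpan ℝ D hxbD
  set V : Submodule ℝ X := M.direction with hV
  set W : Submodule ℝ X := V.topologicalClosure with hW
  -- closure of the affine span is xb +ᵥ W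
  have hMV : (M : Set X) = xb +ᵥ (V : Set X) := by
    ext y
    constructor
    · intro hy
      exact ⟨y - xb, AffineSubspace.vsub_mem_direction hy hxbM, by simp⟩
    · rintro ⟨v, hv, rfl⟩
      have := AffineSubspace.vadd_mem_of_mem_direction hv hxbM
      simpa [add_comm] using this
  have hclos : closure (M : Set X) = xb +ᵥ (W : Set X) := by
    rw [hMV, closure_vadd', Submodule.topologicalClosure_coe]
  have hWclosed : IsClosed (xb +ᵥ (W : Set X)) := by
    rw [← hclos]; exact isClosed_closure
  have hDsub : D ⊆ xb +ᵥ (W : Set X) := by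
    rw [← hclos]
    exact fun x hx => subset_closure (subset_affineSpan ℝ D hx)
  -- move to the subspace W
  set ι : ↥W → X := fun w => xb + (w : X) with hι
  have hιcont : Continuous ι := continuous_const.add continuous_subtype_val
  have hιinj : Function.Injective ι := by
    intro a b h
    exact Subtype.ext (by simpa [hι] using h)
  set D' : Set ↥W := ι ⁻¹' D with hD'
  have hD'conv : Convex ℝ D' := by
    intro u hu v hv a b ha hb hab
    have h := hconv hu hv ha hb hab
    show xb + ↑(a • u + b • v) ∈ D
    have hcast : xb + (↑(a • u + b • v) : X) = a • (xb + ↑u) + b • (xb + ↑v) := by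
      push_cast
      exact combo_shift a b hab xb ↑u ↑v
    rw [hcast]
    exact h
  have hD'closed : IsClosed D' := hclosed.preimage hιcont
  have hD'int : (0 : ↥W) ∈ interior D' := by
    rw [mem_interior]
    refine ⟨ι ⁻¹' U, ?_, hUopen.preimage hιcont, by simpa [hι] using hxbU⟩
    intro w hw
    refine hUsub ⟨hw, ?_⟩
    rw [hclos]
    exact ⟨(w : X), w.2, rfl⟩
  have hD'fin : {F : Set ↥W | IsFaceOf F D'}.Finite := by
    have himg : (Set.image ι) '' {F : Set ↥W | IsFaceOf F D'} ⊆ {F : Set X | IsFaceOf F D} := by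
      rintro _ ⟨F', hF', rfl⟩
      obtain ⟨hF'conv, hF'sub, hF'face⟩ := hF'
      refine ⟨?_, ?_, ?_⟩
      · rintro _ ⟨u, hu, rfl⟩ _ ⟨v, hv, rfl⟩ a b ha hb hab
        refine ⟨a • u + b • v, hF'conv hu hv ha hb hab, ?_⟩
        show xb + ↑(a • u + b • v) = a • (xb + ↑u) + b • (xb + ↑v)
        push_cast
        exact combo_shift a b hab xb ↑u ↑v
      · rintro _ ⟨u, hu, rfl⟩
        exact hF'sub hu
      · intro x y hx hy t ht0 ht1 hcomb
        obtain ⟨vx, hvx, hvxe⟩ := hDsub hx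
        obtain ⟨vy, hvy, hvye⟩ := hDsub hy
        set u : ↥W := ⟨vx, hvx⟩ with hu
        set v : ↥W := ⟨vy, hvy⟩ with hv
        have hxu : x = ι u := hvxe.symm
        have hyv : y = ι v := hvye.symm
        obtain ⟨w, hwF, hwe⟩ := hcomb
        have hweq : (1 - t) • u + t • v = w := by
          apply hιinj
          show xb + ↑((1 - t) • u + t • v) = ι w
          rw [hwe, hxu, hyv]
          push_cast
          exact combo_shift (1 - t) t (by ring) xb ↑u ↑v
        have hface := hF'face (show ι u ∈ D by rw [← hxu]; exact hx)
          (show ι v ∈ D by rw [← hyv]; exact hy) t ht0 ht1 (hweq ▸ hwF)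
        exact ⟨⟨u, hface.1, hxu.symm⟩, ⟨v, hface.2, hyv.symm⟩⟩
    have hfin2 : ((Set.image ι) '' {F : Set ↥W | IsFaceOf F D'}).Finite := hfin.subset himg
    exact hfin2.of_finite_image ((Set.image_injective.2 hιinj).injOn)
  obtain ⟨p, g, β, hDrep⟩ := my_core hD'conv hD'closed hD'int hD'fin
  choose f hf using fun i => my_extend W (g i)
  refine ⟨p, f, fun i => β i + f i xb, xb, W, hWclosed, ?_⟩
  ext x
  constructor
  · intro hx
    obtain ⟨v, hv, hve⟩ := hDsub hx
    refine ⟨⟨v, hv, hve⟩, ?_⟩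
    intro i
    set w : ↥W := ⟨v, hv⟩ with hw
    have hwD' : w ∈ D' := by show ι w ∈ D; show xb + v ∈ D; rw [show xb + v = x from hve]; exact hx
    have := hDrep ▸ hwD'
    have hgw : g i w ≤ β i := this i
    have : f i x = g i w + f i xb := by
      rw [← hve]
      rw [← hf i w]
      show f i (xb + v) = f i v + f i xb
      rw [map_add]; ring
    show f i x ≤ β i + f i xb
    rw [this]
    linarith
  · rintro ⟨⟨v, hv, hve⟩, hineq⟩
    set w : ↥W := ⟨v, hv⟩ with hw
    have hgw : ∀ i, g i w ≤ β i := by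
      intro i
      have h1 : f i x = g i w + f i xb := by
        rw [← hve, ← hf i w]
        show f i (xb + v) = f i v + f i xb
        rw [map_add]; ring
      have h2 : f i x ≤ β i + f i xb := hineq i
      rw [h1] at h2
      linarith
    have : w ∈ D' := by rw [hDrep]; exact hgw
    show x ∈ D
    rw [← show xb + v = x from hve]
    exact this
end

section
/- If T : X → Y is a linear map between locally convex Hausdorff topological vector spaces and D ⊆ X is a nonempty generalized polyhedral convex set, then the closure of T(D) is a generalized polyhedral convex set in Y. -/
open Pointwise

lemma fm_real {ι : Type*} [Fintype ι] (a r : ι → ℝ) :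
    (∃ t : ℝ, ∀ i, a i * t ≤ r i) ↔
      ((∀ i, a i = 0 → 0 ≤ r i) ∧
        ∀ i j, 0 < a i → a j < 0 → a j * r i ≤ a i * r j) := by
  constructor
  · rintro ⟨t, ht⟩
    constructor
    · intro i hi
      have := ht i
      rw [hi] at this; linarith
    · intro i j hi hj
      have h1 := ht i
      have h2 := ht j
      nlinarith
  · rintro ⟨h0, hpn⟩
    by_cases hneg : (Finset.univ.filter (fun j => a j < 0)).Nonempty
    · refine ⟨(Finset.univ.filter (fun j => a j < 0)).sup' hneg (fun j => r j / a j), ?_⟩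
      intro i
      rcases lt_trichotomy (a i) 0 with hi | hi | hi
      · have hle : r i / a i ≤ (Finset.univ.filter (fun j => a j < 0)).sup' hneg (fun j => r j / a j) :=
          Finset.le_sup' (fun j => r j / a j) (by simp only [Finset.mem_filter, Finset.mem_univ, true_and]; exact hi)
        have := mul_le_mul_of_nonpos_left hle (le_of_lt hi)
        rwa [mul_div_cancel₀ _ (ne_of_lt hi)] at this
      · rw [hi, zero_mul]; exact h0 i hi
      · have hle : (Finset.univ.filter (fun j => a j < 0)).sup' hneg (fun j => r j / a j) ≤ r i / a i := by
          apply Finset.sup'_le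
          intro j hj
          rw [Finset.mem_filter] at hj
          have hj' := hj.2
          have key := hpn i j hi hj'
          have e1 : a j * (r j / a j) = r j := mul_div_cancel₀ _ (ne_of_lt hj')
          have e2 : a i * (r i / a i) = r i := mul_div_cancel₀ _ (ne_of_gt hi)
          nlinarith [mul_neg_of_pos_of_neg hi hj']
        have := mul_le_mul_of_nonneg_left hle (le_of_lt hi)
        rwa [mul_div_cancel₀ _ (ne_of_gt hi)] at this
    · by_cases hpos : (Finset.univ.filter (fun i => 0 < a i)).Nonempty
      · refine ⟨(Finset.univ.filter (fun i => 0 < a i)).inf' hpos (fun i => r i / a i), ?_⟩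
        intro i
        rcases lt_trichotomy (a i) 0 with hi | hi | hi
        · exact absurd ⟨i, by simp only [Finset.mem_filter, Finset.mem_univ, true_and]; exact hi⟩ hneg
        · rw [hi, zero_mul]; exact h0 i hi
        · have hle : (Finset.univ.filter (fun i => 0 < a i)).inf' hpos (fun i => r i / a i) ≤ r i / a i :=
            Finset.inf'_le (fun j => r j / a j) (by simp only [Finset.mem_filter, Finset.mem_univ, true_and]; exact hi)
          have := mul_le_mul_of_nonneg_left hle (le_of_lt hi)
          rwa [mul_div_cancel₀ _ (ne_of_gt hi)] at this
      · refine ⟨0, fun i => ?_⟩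
        rcases lt_trichotomy (a i) 0 with hi | hi | hi
        · exact absurd ⟨i, by simp only [Finset.mem_filter, Finset.mem_univ, true_and]; exact hi⟩ hneg
        · rw [hi, zero_mul]; exact h0 i hi
        · exact absurd ⟨i, by simp only [Finset.mem_filter, Finset.mem_univ, true_and]; exact hi⟩ hpos

/-- Convert a system indexed by an arbitrary fintype to one indexed by `Fin q`. -/
lemma sys_toFin {Z : Type*} [AddCommGroup Z] [Module ℝ Z] {ι : Type*} [Fintype ι]
    (d : ι → (Z →ₗ[ℝ] ℝ)) (γ : ι → ℝ) :
    ∃ (q : ℕ) (d' : Fin q → (Z →ₗ[ℝ] ℝ)) (γ' : Fin q → ℝ),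
      {z : Z | ∀ i, d i z ≤ γ i} = {z : Z | ∀ j, d' j z ≤ γ' j} := by
  refine ⟨Fintype.card ι, fun j => d ((Fintype.equivFin ι).symm j),
    fun j => γ ((Fintype.equivFin ι).symm j), ?_⟩
  ext z
  simp only [Set.mem_setOf_eq]
  exact ⟨fun h j => h _, fun h i => by
    have := h (Fintype.equivFin ι i); simpa using this⟩

/-- Fourier–Motzkin: eliminate one real variable from a finite linear system. -/
lemma fm_one {Z : Type*} [AddCommGroup Z] [Module ℝ Z] {ι : Type*} [Fintype ι]
    (a : ι → ℝ) (c : ι → (Z →ₗ[ℝ] ℝ)) (β : ι → ℝ) :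
    ∃ (q : ℕ) (d : Fin q → (Z →ₗ[ℝ] ℝ)) (γ : Fin q → ℝ),
      {z : Z | ∃ t : ℝ, ∀ i, a i * t + c i z ≤ β i} = {z : Z | ∀ j, d j z ≤ γ j} := by
  classical
  set d : ι ⊕ ι × ι → (Z →ₗ[ℝ] ℝ) := fun k =>
    match k with
    | Sum.inl i => if a i = 0 then c i else 0
    | Sum.inr (i, j) => if 0 < a i ∧ a j < 0 then a i • c j - a j • c i else 0
    with hd
  set γ : ι ⊕ ι × ι → ℝ := fun k =>
    match k with
    | Sum.inl i => if a i = 0 then β i else 0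
    | Sum.inr (i, j) => if 0 < a i ∧ a j < 0 then a i * β j - a j * β i else 0
    with hγ
  have key : {z : Z | ∃ t : ℝ, ∀ i, a i * t + c i z ≤ β i} = {z : Z | ∀ k, d k z ≤ γ k} := by
    ext z
    simp only [Set.mem_setOf_eq]
    have : (∃ t : ℝ, ∀ i, a i * t + c i z ≤ β i) ↔ ∃ t : ℝ, ∀ i, a i * t ≤ (β i - c i z) := by
      constructor <;> (rintro ⟨t, ht⟩; exact ⟨t, fun i => by have := ht i; linarith⟩)
    rw [this, fm_real]
    constructor
    · rintro ⟨h0, hpn⟩ k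
      match k with
      | Sum.inl i =>
        simp only [hd, hγ]
        by_cases hi : a i = 0
        · simp only [if_pos hi]
          have := h0 i hi; linarith
        · simp only [if_neg hi, LinearMap.zero_apply]; rfl
      | Sum.inr (i, j) =>
        simp only [hd, hγ]
        by_cases hij : 0 < a i ∧ a j < 0
        · simp only [if_pos hij, LinearMap.sub_apply, LinearMap.smul_apply, smul_eq_mul]
          have := hpn i j hij.1 hij.2; nlinarith [this]
        · simp only [if_neg hij, LinearMap.zero_apply]; rfl
    · intro h
      constructor
      · intro i hi
        have := h (Sum.inl i)
        simp only [hd, hγ, if_pos hi] at this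
        linarith
      · intro i j hi hj
        have := h (Sum.inr (i, j))
        simp only [hd, hγ, if_pos (⟨hi, hj⟩ : 0 < a i ∧ a j < 0), LinearMap.sub_apply,
          LinearMap.smul_apply, smul_eq_mul] at this
        nlinarith [this]
  obtain ⟨q, d', γ', h'⟩ := sys_toFin d γ
  exact ⟨q, d', γ', key.trans h'⟩

/-- The linear map prepending a zero to a vector. -/
def consZeroLM (n : ℕ) : (Fin n → ℝ) →ₗ[ℝ] (Fin (n + 1) → ℝ) where
  toFun u := Fin.cons 0 u
  map_add' u v := by
    funext i
    refine Fin.cases ?_ (fun k => ?_) i <;> simp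
  map_smul' r u := by
    funext i
    refine Fin.cases ?_ (fun k => ?_) i <;> simp

lemma cons_decomp {n : ℕ} (t : ℝ) (u : Fin n → ℝ) :
    (Fin.cons t u : Fin (n + 1) → ℝ) =
      t • (Pi.single (0 : Fin (n + 1)) (1 : ℝ) : Fin (n + 1) → ℝ) +
      (Fin.cons 0 u : Fin (n + 1) → ℝ) := by
  funext i
  refine Fin.cases ?_ (fun k => ?_) i
  · simp
  · simp [Pi.single_eq_of_ne (Fin.succ_ne_zero k)]

/-- Fourier–Motzkin: eliminate `n` real variables from a finite linear system. -/
lemma fm_elim {Z : Type*} [AddCommGroup Z] [Module ℝ Z] :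
    ∀ (n : ℕ) {ι : Type} [Fintype ι]
      (c : ι → (((Fin n → ℝ) × Z) →ₗ[ℝ] ℝ)) (β : ι → ℝ),
    ∃ (q : ℕ) (d : Fin q → (Z →ₗ[ℝ] ℝ)) (γ : Fin q → ℝ),
      {z : Z | ∃ u : Fin n → ℝ, ∀ i, c i (u, z) ≤ β i} = {z : Z | ∀ j, d j z ≤ γ j} := by
  intro n
  induction n with
  | zero =>
    intro ι _ c β
    obtain ⟨q, d', γ', h'⟩ := sys_toFin (fun i => (c i).comp
      (LinearMap.prod (0 : Z →ₗ[ℝ] (Fin 0 → ℝ)) LinearMap.id)) β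
    refine ⟨q, d', γ', ?_⟩
    rw [← h']
    ext z
    simp only [Set.mem_setOf_eq, LinearMap.comp_apply, LinearMap.prod_apply, Pi.prod,
      LinearMap.zero_apply, LinearMap.id_apply]
    constructor
    · rintro ⟨u, hu⟩ i
      have : u = (0 : Fin 0 → ℝ) := Subsingleton.elim _ _
      rw [this] at hu; exact hu i
    · intro h; exact ⟨0, h⟩
  | succ n ih =>
    intro ι _ c β
    set a : ι → ℝ := fun i => c i (Pi.single (0 : Fin (n + 1)) (1 : ℝ), 0) with ha
    set c' : ι → (((Fin n → ℝ) × Z) →ₗ[ℝ] ℝ) := fun i =>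
      (c i).comp ((consZeroLM n).prodMap LinearMap.id) with hc'
    have hdecomp : ∀ (i : ι) (t : ℝ) (u : Fin n → ℝ) (z : Z),
        c i (Fin.cons t u, z) = a i * t + c' i (u, z) := by
      intro i t u z
      have : ((Fin.cons t u : Fin (n+1) → ℝ), z) =
          t • ((Pi.single (0 : Fin (n + 1)) (1 : ℝ) : Fin (n+1) → ℝ), (0 : Z)) +
            ((Fin.cons 0 u : Fin (n+1) → ℝ), z) := by
        rw [Prod.ext_iff]
        constructor
        · simpa using cons_decomp t u
        · simp
      rw [this, map_add, map_smul, smul_eq_mul, mul_comm t]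
      rfl
    obtain ⟨q₁, d₁, γ₁, h₁⟩ := fm_one a c' β
    obtain ⟨q, d, γ, h⟩ := ih d₁ γ₁
    refine ⟨q, d, γ, ?_⟩
    rw [← h]
    ext z
    simp only [Set.mem_setOf_eq]
    constructor
    · rintro ⟨u₁, hu₁⟩
      refine ⟨Fin.tail u₁, ?_⟩
      have : (Fin.tail u₁, z) ∈ {w : (Fin n → ℝ) × Z | ∃ t : ℝ, ∀ i, a i * t + c' i w ≤ β i} := by
        refine ⟨u₁ 0, fun i => ?_⟩
        rw [← hdecomp i (u₁ 0) (Fin.tail u₁) z, Fin.cons_self_tail]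
        exact hu₁ i
      rw [h₁] at this
      exact fun j => this j
    · rintro ⟨u, hu⟩
      have : (u, z) ∈ {w : (Fin n → ℝ) × Z | ∀ j, d₁ j w ≤ γ₁ j} := hu
      rw [← h₁] at this
      obtain ⟨t, ht⟩ := this
      refine ⟨Fin.cons t u, fun i => ?_⟩
      rw [hdecomp i t u z]
      exact ht i

/-- The image of a polyhedron under a linear map between finite-dimensional spaces
is a polyhedron. -/
lemma image_polyhedron {F Z : Type*} [AddCommGroup F] [Module ℝ F] [FiniteDimensional ℝ F]
    [AddCommGroup Z] [Module ℝ Z] [FiniteDimensional ℝ Z] (L : F →ₗ[ℝ] Z)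
    {ι : Type} [Fintype ι] (c : ι → (F →ₗ[ℝ] ℝ)) (β : ι → ℝ) :
    ∃ (q : ℕ) (d : Fin q → (Z →ₗ[ℝ] ℝ)) (γ : Fin q → ℝ),
      L '' {u : F | ∀ i, c i u ≤ β i} = {z : Z | ∀ j, d j z ≤ γ j} := by
  classical
  set n := Module.finrank ℝ F with hn
  set e : (Fin n → ℝ) ≃ₗ[ℝ] F := (Module.finBasis ℝ F).equivFun.symm with he
  set m := Module.finrank ℝ Z with hm
  set b : Module.Basis (Fin m) ℝ Z := Module.finBasis ℝ Z with hb
  set eF : ((Fin n → ℝ) × Z) →ₗ[ℝ] F :=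
    e.toLinearMap.comp (LinearMap.fst ℝ (Fin n → ℝ) Z) with heF
  set sndZ : ((Fin n → ℝ) × Z) →ₗ[ℝ] Z := LinearMap.snd ℝ (Fin n → ℝ) Z with hsndZ
  set cc : ι ⊕ (Fin m ⊕ Fin m) → (((Fin n → ℝ) × Z) →ₗ[ℝ] ℝ) := fun k =>
    match k with
    | Sum.inl i => (c i).comp eF
    | Sum.inr (Sum.inl k) => (b.coord k).comp sndZ - (b.coord k).comp (L.comp eF)
    | Sum.inr (Sum.inr k) => (b.coord k).comp (L.comp eF) - (b.coord k).comp sndZ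
    with hcc
  set ββ : ι ⊕ (Fin m ⊕ Fin m) → ℝ := fun k =>
    match k with
    | Sum.inl i => β i
    | Sum.inr _ => 0
    with hββ
  obtain ⟨q, d, γ, hsys⟩ := fm_elim n cc ββ
  refine ⟨q, d, γ, ?_⟩
  rw [← hsys]
  ext z
  simp only [Set.mem_image, Set.mem_setOf_eq]
  constructor
  · rintro ⟨v, hv, rfl⟩
    refine ⟨e.symm v, fun k => ?_⟩
    match k with
    | Sum.inl i =>
      simp only [hcc, hββ, LinearMap.comp_apply, heF, LinearMap.coe_comp, Function.comp_apply,
        LinearMap.fst_apply, LinearEquiv.coe_coe, LinearEquiv.apply_symm_apply]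
      exact hv i
    | Sum.inr (Sum.inl k) =>
      simp only [hcc, hββ, LinearMap.sub_apply, LinearMap.comp_apply, hsndZ, heF,
        LinearMap.coe_comp, Function.comp_apply, LinearMap.fst_apply, LinearMap.snd_apply,
        LinearEquiv.coe_coe, LinearEquiv.apply_symm_apply, sub_self]
      exact le_refl 0
    | Sum.inr (Sum.inr k) =>
      simp only [hcc, hββ, LinearMap.sub_apply, LinearMap.comp_apply, hsndZ, heF,
        LinearMap.coe_comp, Function.comp_apply, LinearMap.fst_apply, LinearMap.snd_apply,
        LinearEquiv.coe_coe, LinearEquiv.apply_symm_apply, sub_self]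
      exact le_refl 0
  · rintro ⟨u, hu⟩
    have heq : z = L (e u) := by
      apply b.ext_elem
      intro k
      have h1 := hu (Sum.inr (Sum.inl k))
      have h2 := hu (Sum.inr (Sum.inr k))
      simp only [hcc, hββ, LinearMap.sub_apply, LinearMap.comp_apply, hsndZ, heF,
        LinearMap.coe_comp, Function.comp_apply, LinearMap.fst_apply, LinearMap.snd_apply,
        LinearEquiv.coe_coe] at h1 h2
      have : b.coord k z = b.coord k (L (e u)) := le_antisymm (by linarith) (by linarith)
      simpa only [Module.Basis.coord_apply] using this
    refine ⟨e u, fun i => ?_, heq.symm⟩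
    have := hu (Sum.inl i)
    simpa only [hcc, hββ, LinearMap.comp_apply, heF, LinearMap.coe_comp, Function.comp_apply,
      LinearMap.fst_apply, LinearEquiv.coe_coe] using this

open Filter Set Topology in
/-- Hahn–Banach: a continuous linear functional on a subspace of a locally convex
space extends to a continuous linear functional on the whole space. -/
lemma exists_clm_extension {Y : Type*} [AddCommGroup Y] [Module ℝ Y] [TopologicalSpace Y]
    [IsTopologicalAddGroup Y] [ContinuousSMul ℝ Y] [LocallyConvexSpace ℝ Y]
    (V : Submodule ℝ Y) (ψ : V →ₗ[ℝ] ℝ) (hψ : Continuous ψ) :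
    ∃ h : Y →L[ℝ] ℝ, ∀ v : V, h v = ψ v := by
  have h0 : ψ ⁻¹' (Set.Ioo (-1 : ℝ) 1) ∈ 𝓝 (0 : V) :=
    hψ.continuousAt.preimage_mem_nhds (by
      rw [map_zero]; exact Ioo_mem_nhds (by norm_num) (by norm_num))
  rw [nhds_subtype_eq_comap] at h0
  obtain ⟨U, hU, hUsub⟩ := Filter.mem_comap.1 h0
  rw [Submodule.coe_zero] at hU
  obtain ⟨S, ⟨hSnhds, hSconv⟩, hSU⟩ := (LocallyConvexSpace.convex_basis_zero ℝ Y).mem_iff.1 hU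
  set S' : Set Y := S ∩ -S with hS'
  have hnegS : -S ∈ 𝓝 (0 : Y) := by
    have : -S = Neg.neg ⁻¹' S := by ext x; simp [Set.mem_neg]
    rw [this]
    exact (continuous_neg.tendsto (0 : Y)).eventually_mem (by rwa [neg_zero])
  have hS'nhds : S' ∈ 𝓝 (0 : Y) := Filter.inter_mem hSnhds hnegS
  have hS'conv : Convex ℝ S' := hSconv.inter (hSconv.neg)
  have hsymm : ∀ x ∈ S', -x ∈ S' := by
    rintro x ⟨hx1, hx2⟩
    exact ⟨Set.mem_neg.1 hx2, by rwa [Set.mem_neg, neg_neg]⟩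
  have habs : Absorbent ℝ S' := absorbent_nhds_zero hS'nhds
  have key : ∀ (v : V) (r : ℝ), 0 < r → (v : Y) ∈ r • S' → ψ v ≤ r := by
    intro v r hr hv
    obtain ⟨w, hw, hwv⟩ := hv
    have hwV : w ∈ V := by
      have : w = r⁻¹ • (v : Y) := by
        rw [← hwv, smul_smul, inv_mul_cancel₀ (ne_of_gt hr), one_smul]
      rw [this]
      exact V.smul_mem _ v.2
    have hU' : (⟨w, hwV⟩ : V) ∈ Subtype.val ⁻¹' U := by
      simp only [Set.mem_preimage]
      exact hSU (hw.1)
    have hlt : ψ ⟨w, hwV⟩ < 1 := (hUsub hU').2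
    have : v = r • (⟨w, hwV⟩ : V) := by
      apply Subtype.ext
      simp [hwv]
    rw [this, map_smul, smul_eq_mul]
    nlinarith
  have hf : ∀ x : (⟨V, ψ⟩ : Y →ₗ.[ℝ] ℝ).domain, (⟨V, ψ⟩ : Y →ₗ.[ℝ] ℝ) x ≤ gauge S' x := by
    intro x
    by_contra hcon
    push_neg at hcon
    obtain ⟨r, hr0, hr1, hmem⟩ := exists_lt_of_gauge_lt habs hcon
    exact absurd (key x r hr0 hmem) (not_le.2 hr1)
  obtain ⟨g, hg_eq, hg_le⟩ := exists_extension_of_le_sublinear ⟨V, ψ⟩ (gauge S')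
    (fun c hc x => gauge_smul_of_nonneg hc.le x) (gauge_add_le hS'conv habs) hf
  have hgabs : ∀ y, |g y| ≤ gauge S' y := by
    intro y
    rw [abs_le]
    constructor
    · have := hg_le (-y)
      rw [map_neg, gauge_neg hsymm] at this
      linarith
    · exact hg_le y
  have hc : Continuous g := by
    apply continuous_of_continuousAt_zero g
    rw [ContinuousAt, map_zero]
    refine Metric.tendsto_nhds.2 fun ε hε => ?_
    have hmem : (ε / 2) • S' ∈ 𝓝 (0 : Y) :=
      (set_smul_mem_nhds_zero_iff (by positivity : (ε / 2 : ℝ) ≠ 0)).2 hS'nhds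
    filter_upwards [hmem] with y hy
    have h1 : gauge S' y ≤ ε / 2 := gauge_le_of_mem (by positivity) hy
    have h2 := hgabs y
    rw [Real.dist_eq, sub_zero]
    linarith [abs_nonneg (g y)]
  exact ⟨⟨g, hc⟩, fun v => hg_eq v⟩

-- MAIN

/-- The closure of the image of a generalized polyhedral convex set under a
linear map is a generalized polyhedral convex set. -/
theorem closure_image_isGPCS {X : Type*} [AddCommGroup X] [Module ℝ X] [TopologicalSpace X]
    [IsTopologicalAddGroup X] [ContinuousSMul ℝ X] [LocallyConvexSpace ℝ X] [T2Space X] {Y : Type*} [AddCommGroup Y] [Module ℝ Y] [TopologicalSpace Y]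
    [IsTopologicalAddGroup Y] [ContinuousSMul ℝ Y] [LocallyConvexSpace ℝ Y] [T2Space Y]
    (T : X →ₗ[ℝ] Y) (D : Set X) (hD : IsGPCS D) (hne : D.Nonempty) :
    IsGPCS (closure (T '' D)) := by
  classical
  obtain ⟨p, f, α, x₀, W, hWcl, hDeq⟩ := hD
  set β : Fin p → ℝ := fun i => α i - f i x₀ with hβ
  set E : Set X := {x | x ∈ (W : Set X) ∧ ∀ i, f i x ≤ β i} with hE
  -- D is a translate of E
  have hDE : D = x₀ +ᵥ E := by
    rw [hDeq]
    ext x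
    rw [Set.mem_vadd_set_iff_neg_vadd_mem]
    simp only [Set.mem_sep_iff, Set.mem_vadd_set_iff_neg_vadd_mem, hE, Set.mem_setOf_eq,
      vadd_eq_add, SetLike.mem_coe, hβ, map_add, map_neg]
    constructor
    · rintro ⟨h1, h2⟩
      exact ⟨h1, fun i => by have := h2 i; linarith⟩
    · rintro ⟨h1, h2⟩
      exact ⟨h1, fun i => by have := h2 i; linarith⟩
  -- decompose W into the common kernel and a finite-dimensional complement
  set π : ↥W →ₗ[ℝ] (Fin p → ℝ) :=
    LinearMap.pi (fun i => (f i).toLinearMap.comp W.subtype) with hπ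
  set N' : Submodule ℝ ↥W := LinearMap.ker π with hN'
  obtain ⟨F', hcompl⟩ := Submodule.exists_isCompl N'
  haveI : FiniteDimensional ℝ (↥W ⧸ N') := Module.Finite.equiv π.quotKerEquivRange.symm
  haveI hFD : FiniteDimensional ℝ F' :=
    Module.Finite.equiv (Submodule.quotientEquivOfIsCompl N' F' hcompl)
  set Nsub : Submodule ℝ X := N'.map W.subtype with hNsub
  set Fsub : Submodule ℝ X := F'.map W.subtype with hFsub
  haveI : FiniteDimensional ℝ ↥Fsub :=
    Module.Finite.equiv (Submodule.equivMapOfInjective W.subtype W.injective_subtype F')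
  have hNker : ∀ x ∈ Nsub, ∀ i, f i x = 0 := by
    rintro x ⟨y, hy, rfl⟩ i
    have : π y = 0 := hy
    have := congrFun this i
    simpa [hπ] using this
  set Q : Set X := {x | x ∈ (Fsub : Set X) ∧ ∀ i, f i x ≤ β i} with hQ
  -- E = Nsub + Q
  have hENQ : E = (Nsub : Set X) + Q := by
    ext x
    rw [Set.mem_add]
    constructor
    · rintro ⟨hxW, hxf⟩
      have hxtop : (⟨x, hxW⟩ : ↥W) ∈ N' ⊔ F' := by
        rw [hcompl.sup_eq_top]; trivial
      obtain ⟨y, hy, z, hz, hyz⟩ := Submodule.mem_sup.1 hxtop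
      have hyzx : (↑y : X) + ↑z = x := congrArg Subtype.val hyz
      have hfy : ∀ i, f i (↑y : X) = 0 := hNker _ ⟨y, hy, rfl⟩
      refine ⟨↑y, ⟨y, hy, rfl⟩, ↑z, ⟨⟨z, hz, rfl⟩, fun i => ?_⟩, hyzx⟩
      have : f i x = f i (↑y : X) + f i (↑z : X) := by rw [← hyzx, map_add]
      rw [hfy i] at this
      have := hxf i
      linarith
    · rintro ⟨a, ha, b, ⟨hbF, hbf⟩, rfl⟩
      have haW : a ∈ W := Submodule.map_subtype_le W N' ha
      have hbW : b ∈ W := Submodule.map_subtype_le W F' hbF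
      refine ⟨W.add_mem haW hbW, fun i => ?_⟩
      rw [map_add, hNker a ha i, zero_add]
      exact hbf i
  -- push through T
  have himgvadd : T '' (x₀ +ᵥ E) = T x₀ +ᵥ T '' E := by
    ext y
    rw [Set.mem_vadd_set_iff_neg_vadd_mem]
    constructor
    · rintro ⟨x, hx, rfl⟩
      rw [Set.mem_vadd_set_iff_neg_vadd_mem] at hx
      refine ⟨-x₀ + x, hx, ?_⟩
      simp [map_add, map_neg, vadd_eq_add]
    · rintro ⟨x, hx, hxy⟩
      refine ⟨x₀ + x, ?_, ?_⟩
      · rw [Set.mem_vadd_set_iff_neg_vadd_mem]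
        simpa [vadd_eq_add] using hx
      · have : T x = -T x₀ + y := hxy
        rw [map_add, this]
        simp [vadd_eq_add]
  have himg : T '' D = T x₀ +ᵥ ((T '' (Nsub : Set X)) + T '' Q) := by
    rw [hDE, himgvadd, hENQ, Set.image_add]
  -- the closed subspace M
  set M : Submodule ℝ Y := (Nsub.map T).topologicalClosure with hM
  have hMcl : IsClosed (M : Set Y) := Submodule.isClosed_topologicalClosure _
  haveI : IsClosed (M : Set Y) := hMcl
  set ρ : Y →ₗ[ℝ] (Y ⧸ M) := M.mkQ with hρ
  have hρc : Continuous ρ := M.isOpenQuotientMap_mkQ.continuous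
  set A : ↥Fsub →ₗ[ℝ] (Y ⧸ M) := (ρ.comp T).comp Fsub.subtype with hA
  set Z₀ : Submodule ℝ (Y ⧸ M) := LinearMap.range A with hZ₀
  haveI : FiniteDimensional ℝ ↥Z₀ := inferInstance
  have hZ₀cl : IsClosed (Z₀ : Set (Y ⧸ M)) := Z₀.closed_of_finiteDimensional
  set L : ↥Fsub →ₗ[ℝ] ↥Z₀ := A.rangeRestrict with hL
  set c : Fin p → (↥Fsub →ₗ[ℝ] ℝ) := fun i => (f i).toLinearMap.comp Fsub.subtype with hc
  set Q' : Set ↥Fsub := {u | ∀ i, c i u ≤ β i} with hQ'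
  have hQval : Q = Subtype.val '' Q' := by
    ext x
    constructor
    · rintro ⟨hxF, hxf⟩
      exact ⟨⟨x, hxF⟩, fun i => hxf i, rfl⟩
    · rintro ⟨u, hu, rfl⟩
      exact ⟨u.2, fun i => hu i⟩
  obtain ⟨q₂, d₂, γ₂, himgQ⟩ := image_polyhedron L c β
  set R' : Set ↥Z₀ := {ζ | ∀ j, d₂ j ζ ≤ γ₂ j} with hR'
  have hR'cl : IsClosed R' := by
    have : R' = ⋂ j, (d₂ j) ⁻¹' (Set.Iic (γ₂ j)) := by
      ext ζ; simp [hR', Set.mem_iInter]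
    rw [this]
    exact isClosed_iInter fun j =>
      IsClosed.preimage (d₂ j).continuous_of_finiteDimensional isClosed_Iic
  have hRcl : IsClosed (Subtype.val '' R' : Set (Y ⧸ M)) :=
    hZ₀cl.isClosedEmbedding_subtypeVal.isClosedMap _ hR'cl
  -- M + T '' Q is the preimage of R under ρ
  have hAval : ∀ u : ↥Fsub, (L u : Y ⧸ M) = ρ (T ↑u) := fun u => rfl
  have hMQR : (M : Set Y) + T '' Q = ρ ⁻¹' (Subtype.val '' R') := by
    ext y
    rw [Set.mem_add]
    constructor
    · rintro ⟨m, hm, b, ⟨x, hxQ, rfl⟩, rfl⟩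
      obtain ⟨u, huQ', rfl⟩ := hQval ▸ hxQ
      have hρm : ρ m = 0 := (Submodule.Quotient.mk_eq_zero M).2 hm
      simp only [Set.mem_preimage, map_add, hρm, zero_add]
      rw [← hAval u]
      exact ⟨L u, himgQ ▸ Set.mem_image_of_mem L huQ', rfl⟩
    · intro hy
      obtain ⟨ζ, hζ, hval⟩ := hy
      rw [← himgQ] at hζ
      obtain ⟨u, huQ', rfl⟩ := hζ
      have h1 : ρ y = ρ (T ↑u) := by rw [← hAval u, hval]
      have h2 : y - T ↑u ∈ M := by
        rw [← Submodule.ker_mkQ M]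
        simp only [LinearMap.mem_ker, map_sub]
        rw [← hρ] at *
        rw [h1, sub_self]
      refine ⟨y - T ↑u, h2, T ↑u, ⟨↑u, hQval ▸ Set.mem_image_of_mem _ huQ', rfl⟩, by abel⟩
  have hMQcl : IsClosed ((M : Set Y) + T '' Q) := by
    rw [hMQR]; exact hRcl.preimage hρc
  -- closure computation
  have hclosE : closure ((T '' (Nsub : Set X)) + T '' Q) = (M : Set Y) + T '' Q := by
    apply Set.Subset.antisymm
    · apply closure_minimal _ hMQcl
      apply Set.add_subset_add_right
      intro a ha
      have : a ∈ (Nsub.map T : Set Y) := by rwa [Submodule.map_coe]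
      exact Submodule.le_topologicalClosure _ this
    · rintro y hy
      rw [Set.mem_add] at hy
      obtain ⟨m, hm, b, hb, rfl⟩ := hy
      have hmcl : m ∈ closure ((Nsub.map T : Submodule ℝ Y) : Set Y) := by
        rw [← Submodule.topologicalClosure_coe]; exact hm
      rw [Submodule.map_coe] at hmcl
      have hfin := map_mem_closure (f := fun z => z + b) (continuous_add_right b) hmcl
        (fun a ha => Set.add_mem_add ha hb)
      simpa using hfin
  have hclosD : closure (T '' D) = T x₀ +ᵥ ((M : Set Y) + T '' Q) := by
    rw [himg, closure_vadd, hclosE]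
  -- the affine subspace
  set V : Submodule ℝ Y := Z₀.comap ρ with hV
  have hVcl : IsClosed (V : Set Y) := by
    have : (V : Set Y) = ρ ⁻¹' (Z₀ : Set (Y ⧸ M)) := rfl
    rw [this]
    exact hZ₀cl.preimage hρc
  -- the functionals
  set B' : ↥V →ₗ[ℝ] ↥Z₀ :=
    LinearMap.codRestrict Z₀ (ρ.comp V.subtype) (fun v => v.2) with hB'
  have hB'c : Continuous B' := Continuous.subtype_mk (hρc.comp continuous_subtype_val) _
  have hψc : ∀ j, Continuous ((d₂ j).comp B') := fun j =>
    ((d₂ j).continuous_of_finiteDimensional).comp hB'c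
  choose g hg using fun j => exists_clm_extension V ((d₂ j).comp B') (hψc j)
  refine ⟨q₂, g, fun j => γ₂ j + g j (T x₀), T x₀, V, ?_, ?_⟩
  · have : (T x₀ +ᵥ (V : Set Y)) = (fun y => -T x₀ + y) ⁻¹' (V : Set Y) := by
      ext y
      rw [Set.mem_vadd_set_iff_neg_vadd_mem]
      rfl
    rw [this]
    exact hVcl.preimage (continuous_const.add continuous_id)
  · rw [hclosD]
    ext y
    rw [Set.mem_vadd_set_iff_neg_vadd_mem, Set.mem_sep_iff, Set.mem_vadd_set_iff_neg_vadd_mem]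
    have hyv : y = T x₀ + (-T x₀ + y) := by abel
    constructor
    · intro hv
      have hvpre : (-T x₀ + y : Y) ∈ ρ ⁻¹' (Subtype.val '' R') := by
        rw [← hMQR]; exact hv
      obtain ⟨ζ, hζ, hval⟩ := hvpre
      have hvV : (-T x₀ + y : Y) ∈ V := by
        show ρ (-T x₀ + y) ∈ Z₀
        rw [← hval]; exact ζ.2
      refine ⟨hvV, fun j => ?_⟩
      have hB'eq : B' (⟨-T x₀ + y, hvV⟩ : ↥V) = ζ := by
        apply Subtype.ext
        exact hval.symm
      have h1 : g j (-T x₀ + y) = d₂ j (B' ⟨-T x₀ + y, hvV⟩) := hg j ⟨-T x₀ + y, hvV⟩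
      have h2 : d₂ j (B' ⟨-T x₀ + y, hvV⟩) ≤ γ₂ j := by rw [hB'eq]; exact hζ j
      have h3 : g j y = g j (T x₀) + g j (-T x₀ + y) := by
        conv_lhs => rw [hyv]
        rw [map_add]
      have h4 : g j (-T x₀ + y) ≤ γ₂ j := by rw [h1]; exact h2
      show g j y ≤ γ₂ j + g j (T x₀)
      rw [h3]
      linarith
    · rintro ⟨hvV, hcons⟩
      have hR'mem : B' (⟨-T x₀ + y, hvV⟩ : ↥V) ∈ R' := by
        intro j
        have h1 : g j (-T x₀ + y) = d₂ j (B' ⟨-T x₀ + y, hvV⟩) := hg j ⟨-T x₀ + y, hvV⟩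
        have h3 : g j y = g j (T x₀) + g j (-T x₀ + y) := by
          conv_lhs => rw [hyv]
          rw [map_add]
        have hc5 : g j y ≤ γ₂ j + g j (T x₀) := hcons j
        rw [h3] at hc5
        rw [← h1]
        linarith
      rw [hMQR]
      exact ⟨B' ⟨-T x₀ + y, hvV⟩, hR'mem, rfl⟩
end

section
/- A nonempty subset D ⊆ X is polyhedral convex if and only if there exist finitely many points u₁,...,u_k, directions v₁,...,v_ℓ in X, and a closed linear subspace X₀ ⊆ X of finite codimension, such that D = conv{u₁,...,u_k} + cone{v₁,...,v_ℓ} + X₀. -/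
open Pointwise

section ConeLemmas
variable {V W : Type*} [AddCommGroup V] [Module ℝ V] [AddCommGroup W] [Module ℝ W]

/-- The convex cone generated by a finite family of vectors. -/
def coneIdx {ι : Type*} [Fintype ι] (v : ι → V) : Set V :=
  {x | ∃ μ : ι → ℝ, (∀ j, 0 ≤ μ j) ∧ x = ∑ j, μ j • v j}

/-- Farkas' lemma, algebraic version, by induction on the number of generators. -/
lemma farkas : ∀ (ℓ : ℕ) (v : Fin ℓ → V) (x : V), x ∉ coneIdx v →
    ∃ f : V →ₗ[ℝ] ℝ, (∀ j, f (v j) ≤ 0) ∧ 0 < f x := by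
  intro ℓ
  induction ℓ with
  | zero =>
    intro v x hx
    have hx0 : x ≠ 0 := by
      rintro rfl; exact hx ⟨0, fun j => le_refl _, by simp⟩
    have : ¬ ∀ φ : Module.Dual ℝ V, φ x = 0 := by
      rw [Module.forall_dual_apply_eq_zero_iff]; exact hx0
    push_neg at this
    obtain ⟨φ, hφ⟩ := this
    rcases hφ.lt_or_gt with h | h
    · exact ⟨-φ, fun j => j.elim0, by simpa using h⟩
    · exact ⟨φ, fun j => j.elim0, h⟩
  | succ ℓ ih =>
    intro v x hx
    have hx' : x ∉ coneIdx (v ∘ Fin.castSucc) := by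
      rintro ⟨μ, hμ, rfl⟩
      refine hx ⟨Fin.snoc μ 0, fun j => ?_, ?_⟩
      · refine Fin.lastCases ?_ (fun j => ?_) j
        · simp
        · simpa using hμ j
      · rw [Fin.sum_univ_castSucc]; simp
    obtain ⟨a, ha, hax⟩ := ih _ _ hx'
    by_cases hal : a (v (Fin.last ℓ)) ≤ 0
    · refine ⟨a, fun j => ?_, hax⟩
      refine Fin.lastCases hal (fun j => ha j) j
    push_neg at hal
    set c := a (v (Fin.last ℓ)) with hc
    set x' := x - (a x / c) • v (Fin.last ℓ) with hx'def
    set v' : Fin ℓ → V := fun j => v j.castSucc - (a (v j.castSucc) / c) • v (Fin.last ℓ) with hv'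
    have hx'mem : x' ∉ coneIdx v' := by
      rintro ⟨μ, hμ, hsum⟩
      apply hx
      have hxeq : x = ∑ j, μ j • v j.castSucc +
          ((a x - ∑ j, μ j * a (v j.castSucc)) / c) • v (Fin.last ℓ) := by
        have h1 : x = ∑ j, μ j • v' j + (a x / c) • v (Fin.last ℓ) := by
          rw [← hsum, hx'def]; abel
        have h2 : (∑ j, μ j * a (v j.castSucc)) / c
            = ∑ j, μ j * (a (v j.castSucc) / c) := by
          rw [Finset.sum_div]
          exact Finset.sum_congr rfl fun j _ => (mul_div_assoc _ _ _)
        conv_lhs => rw [h1, hv']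
        simp only [smul_sub, smul_smul, Finset.sum_sub_distrib, ← Finset.sum_smul]
        rw [sub_div, sub_smul, h2]
        abel
      refine ⟨Fin.snoc μ ((a x - ∑ j, μ j * a (v j.castSucc)) / c), fun j => ?_, ?_⟩
      · refine Fin.lastCases ?_ (fun j => ?_) j
        · simp only [Fin.snoc_last]
          apply div_nonneg _ hal.le
          have : ∑ j, μ j * a (v j.castSucc) ≤ 0 :=
            Finset.sum_nonpos fun j _ => mul_nonpos_of_nonneg_of_nonpos (hμ j) (ha j)
          linarith
        · simpa using hμ j
      · rw [Fin.sum_univ_castSucc]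
        simpa using hxeq
    obtain ⟨a', ha', hax'⟩ := ih _ _ hx'mem
    refine ⟨a' - (a' (v (Fin.last ℓ)) / c) • a, fun j => ?_, ?_⟩
    · refine Fin.lastCases ?_ (fun j => ?_) j
      · simp only [LinearMap.sub_apply, LinearMap.smul_apply, smul_eq_mul]
        rw [div_mul_cancel₀ _ (ne_of_gt hal)]
        simp
      · have h3 := ha' j
        simp only [hv', map_sub, map_smul, smul_eq_mul] at h3
        simp only [LinearMap.sub_apply, LinearMap.smul_apply, smul_eq_mul]
        calc a' (v j.castSucc) - a' (v (Fin.last ℓ)) / c * a (v j.castSucc)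
            = a' (v j.castSucc) - a (v j.castSucc) / c * a' (v (Fin.last ℓ)) := by ring
          _ ≤ 0 := h3
    · have h4 := hax'
      simp only [hx'def, map_sub, map_smul, smul_eq_mul] at h4
      simp only [LinearMap.sub_apply, LinearMap.smul_apply, smul_eq_mul]
      calc (0:ℝ) < a' x - a x / c * a' (v (Fin.last ℓ)) := h4
        _ = a' x - a' (v (Fin.last ℓ)) / c * a x := by ring

lemma zero_mem_coneIdx {ι : Type*} [Fintype ι] (v : ι → V) : (0 : V) ∈ coneIdx v :=
  ⟨0, fun _ => le_refl _, by simp⟩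

lemma smul_add_smul_mem_coneIdx {ι : Type*} [Fintype ι] (v : ι → V) {a b : ℝ}
    (ha : 0 ≤ a) (hb : 0 ≤ b) (j k : ι) : a • v j + b • v k ∈ coneIdx v := by
  classical
  refine ⟨fun i => (if i = j then a else 0) + (if i = k then b else 0), fun i => by positivity, ?_⟩
  simp only [add_smul, Finset.sum_add_distrib, ite_smul, zero_smul]
  rw [Finset.sum_ite_eq' Finset.univ j (fun i => a • v i),
    Finset.sum_ite_eq' Finset.univ k (fun i => b • v i)]
  simp

lemma smul_mem_coneIdx {ι : Type*} [Fintype ι] (v : ι → V) {a : ℝ} (ha : 0 ≤ a) (j : ι) :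
    a • v j ∈ coneIdx v := by
  have := smul_add_smul_mem_coneIdx v ha le_rfl j j
  simpa using this

lemma mem_coneIdx_self {ι : Type*} [Fintype ι] (v : ι → V) (j : ι) : v j ∈ coneIdx v := by
  simpa using smul_mem_coneIdx v zero_le_one j

lemma coneIdx_subset_coneIdx {ι κ : Type*} [Fintype ι] [Fintype κ] {v : ι → V} {w : κ → V}
    (h : ∀ m, w m ∈ coneIdx v) : coneIdx w ⊆ coneIdx v := by
  rintro x ⟨μ, hμ, rfl⟩
  choose ν hν hw using h
  refine ⟨fun j => ∑ m, μ m * ν m j, fun j => Finset.sum_nonneg fun m _ =>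
    mul_nonneg (hμ m) (hν m j), ?_⟩
  calc ∑ m, μ m • w m = ∑ m, ∑ j, (μ m * ν m j) • v j := by
        refine Finset.sum_congr rfl fun m _ => ?_
        rw [hw m, Finset.smul_sum]
        simp [smul_smul]
    _ = ∑ j, (∑ m, μ m * ν m j) • v j := by
        rw [Finset.sum_comm]
        exact Finset.sum_congr rfl fun j _ => (Finset.sum_smul).symm

lemma apply_nonpos_of_mem_coneIdx (f : V →ₗ[ℝ] ℝ) {ι : Type*} [Fintype ι] {v : ι → V}
    (h : ∀ j, f (v j) ≤ 0) {x : V} (hx : x ∈ coneIdx v) : f x ≤ 0 := by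
  obtain ⟨μ, hμ, rfl⟩ := hx
  rw [map_sum]
  refine Finset.sum_nonpos fun j _ => ?_
  rw [map_smul, smul_eq_mul]
  exact mul_nonpos_of_nonneg_of_nonpos (hμ j) (h j)

lemma coneIdx_reindex {ι κ : Type*} [Fintype ι] [Fintype κ] (e : κ ≃ ι) (v : ι → V) :
    coneIdx (v ∘ e) = coneIdx v := by
  ext x
  constructor
  · rintro ⟨μ, hμ, rfl⟩
    exact ⟨μ ∘ e.symm, fun j => hμ _, by rw [← Equiv.sum_comp e]; simp⟩
  · rintro ⟨μ, hμ, rfl⟩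
    exact ⟨μ ∘ e, fun j => hμ _, by rw [← Equiv.sum_comp e (fun i => μ i • v i)]; simp⟩

/-- Double description step: intersecting a f.g. cone with a homogeneous halfspace. -/
lemma coneIdx_inter_halfspace {ι : Type*} [Fintype ι] (v : ι → V) (g : V →ₗ[ℝ] ℝ) :
    ∃ (n : ℕ) (w : Fin n → V), coneIdx v ∩ {x | g x ≤ 0} = coneIdx w := by
  classical
  obtain ⟨w, hwdef⟩ : ∃ w : (ι ⊕ ι × ι) → V, w =
      Sum.elim (fun j => if g (v j) ≤ 0 then v j else 0)
        (fun jk => if g (v jk.1) ≤ 0 ∧ 0 < g (v jk.2) then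
          g (v jk.2) • v jk.1 - g (v jk.1) • v jk.2 else 0) := ⟨_, rfl⟩
  suffices hmain : coneIdx v ∩ {x | g x ≤ 0} = coneIdx w by
    refine ⟨Fintype.card (ι ⊕ ι × ι), w ∘ (Fintype.equivFin _).symm, ?_⟩
    rw [hmain, coneIdx_reindex]
  have hwmem : ∀ m, w m ∈ coneIdx v := by
    rintro (j | ⟨j, k⟩) <;> simp only [hwdef, Sum.elim_inl, Sum.elim_inr]
    · split_ifs
      · exact mem_coneIdx_self v _
      · exact zero_mem_coneIdx v
    · split_ifs with h
      · rw [sub_eq_add_neg, ← neg_smul]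
        exact smul_add_smul_mem_coneIdx v h.2.le (by linarith [h.1]) _ _
      · exact zero_mem_coneIdx v
  have hwneg : ∀ m, g (w m) ≤ 0 := by
    rintro (j | ⟨j, k⟩) <;> simp only [hwdef, Sum.elim_inl, Sum.elim_inr]
    · split_ifs with h
      · exact h
      · simp
    · split_ifs with h
      · rw [map_sub, map_smul, map_smul, smul_eq_mul, smul_eq_mul, mul_comm]
        simp
      · simp
  apply Set.Subset.antisymm
  · rintro x ⟨⟨μ, hμ, rfl⟩, hg⟩
    simp only [Set.mem_setOf_eq] at hg
    set p : ι → Prop := fun j => g (v j) ≤ 0 with hp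
    set N : Finset ι := Finset.univ.filter p with hNdef
    set P : Finset ι := Finset.univ.filter (fun j => ¬ p j) with hPdef
    have hPpos : ∀ k ∈ P, 0 < g (v k) := fun k hk => by
      have := (Finset.mem_filter.mp hk).2
      simpa [hp] using lt_of_not_ge this
    have hNneg : ∀ j ∈ N, g (v j) ≤ 0 := fun j hj => (Finset.mem_filter.mp hj).2
    set y : V := ∑ j ∈ N, μ j • v j with hy
    set z : V := ∑ k ∈ P, μ k • v k with hz
    have hyz : y + z = ∑ j, μ j • v j := Finset.sum_filter_add_sum_filter_not _ _ _
    set T : ℝ := ∑ k ∈ P, μ k * g (v k) with hT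
    set S : ℝ := ∑ j ∈ N, -(μ j * g (v j)) with hS
    have hT0 : 0 ≤ T := Finset.sum_nonneg fun k hk =>
      mul_nonneg (hμ k) (hPpos k hk).le
    have hS0 : 0 ≤ S := Finset.sum_nonneg fun j hj => by
      have := mul_nonpos_of_nonneg_of_nonpos (hμ j) (hNneg j hj); linarith
    have hgx : g (∑ j, μ j • v j) = T - S := by
      rw [map_sum]
      simp only [map_smul, smul_eq_mul]
      rw [← Finset.sum_filter_add_sum_filter_not Finset.univ p (fun j => μ j * g (v j))]
      have : S = -(∑ j ∈ N, μ j * g (v j)) := by rw [hS]; simp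
      rw [← hNdef, ← hPdef, ← hT]
      linarith [this]
    have hTS : T ≤ S := by rw [hgx] at hg; linarith
    by_cases hTzero : T = 0
    · -- all positive-part coefficients vanish
      have hμP : ∀ k ∈ P, μ k = 0 := by
        intro k hk
        have h0 : μ k * g (v k) = 0 := by
          have := (Finset.sum_eq_zero_iff_of_nonneg (fun k hk =>
            mul_nonneg (hμ k) (hPpos k hk).le)).mp hTzero
          exact this k hk
        rcases mul_eq_zero.mp h0 with h | h
        · exact h
        · exact absurd h (ne_of_gt (hPpos k hk))
      have hzzero : z = 0 := by
        rw [hz]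
        exact Finset.sum_eq_zero fun k hk => by rw [hμP k hk, zero_smul]
      refine ⟨Sum.elim (fun j => if p j then μ j else 0) (fun _ => 0), ?_, ?_⟩
      · rintro (j | jk)
        · simp only [Sum.elim_inl]; split_ifs
          · exact hμ j
          · exact le_rfl
        · simp
      · rw [Fintype.sum_sum_type]
        simp only [Sum.elim_inl, Sum.elim_inr, zero_smul, Finset.sum_const_zero, add_zero]
        have : ∀ j : ι, (if p j then μ j else 0) • w (Sum.inl j)
            = if p j then μ j • v j else 0 := by
          intro j
          simp only [hwdef, Sum.elim_inl, hp]
          split_ifs <;> simp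
        rw [Finset.sum_congr rfl fun j _ => this j, ← Finset.sum_filter, ← hNdef, ← hy]
        rw [← hyz, hzzero, add_zero]
    · have hTpos : 0 < T := lt_of_le_of_ne hT0 (Ne.symm hTzero)
      have hSpos : 0 < S := lt_of_lt_of_le hTpos hTS
      have hfrac : T / S ≤ 1 := (div_le_one hSpos).mpr hTS
      refine ⟨Sum.elim (fun j => if p j then (1 - T / S) * μ j else 0)
        (fun jk => if p jk.1 ∧ 0 < g (v jk.2) then μ jk.1 * μ jk.2 / S else 0), ?_, ?_⟩
      · rintro (j | jk)
        · simp only [Sum.elim_inl]; split_ifs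
          · exact mul_nonneg (by linarith) (hμ j)
          · exact le_rfl
        · simp only [Sum.elim_inr]; split_ifs
          · exact div_nonneg (mul_nonneg (hμ _) (hμ _)) hSpos.le
          · exact le_rfl
      · rw [Fintype.sum_sum_type]
        have hleft : ∑ j : ι, (if p j then (1 - T / S) * μ j else 0) • w (Sum.inl j)
            = (1 - T / S) • y := by
          have : ∀ j : ι, (if p j then (1 - T / S) * μ j else 0) • w (Sum.inl j)
              = if p j then ((1 - T / S) * μ j) • v j else 0 := by
            intro j
            simp only [hwdef, Sum.elim_inl, hp]
            split_ifs <;> simp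
          rw [Finset.sum_congr rfl fun j _ => this j, ← Finset.sum_filter, ← hNdef, hy,
            Finset.smul_sum]
          exact Finset.sum_congr rfl fun j _ => by rw [smul_smul]
        have hright : ∑ jk : ι × ι,
            (if p jk.1 ∧ 0 < g (v jk.2) then μ jk.1 * μ jk.2 / S else 0) • w (Sum.inr jk)
            = (T / S) • y + z := by
          have hterm : ∀ jk : ι × ι,
              (if p jk.1 ∧ 0 < g (v jk.2) then μ jk.1 * μ jk.2 / S else 0) • w (Sum.inr jk)
              = if p jk.1 then (if 0 < g (v jk.2) then
                  (μ jk.1 * μ jk.2 / S) • (g (v jk.2) • v jk.1 - g (v jk.1) • v jk.2)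
                  else 0) else 0 := by
            intro jk
            simp only [hwdef, Sum.elim_inr, hp]
            by_cases h1 : g (v jk.1) ≤ 0 <;> by_cases h2 : 0 < g (v jk.2) <;>
              simp [h1, h2]
          rw [Finset.sum_congr rfl fun jk _ => hterm jk, Fintype.sum_prod_type]
          have hpull : ∀ j : ι, (∑ k : ι, if p j then (if 0 < g (v k) then
              (μ j * μ k / S) • (g (v k) • v j - g (v j) • v k) else 0) else 0)
              = if p j then ∑ k ∈ P, (μ j * μ k / S) • (g (v k) • v j - g (v j) • v k)
                else 0 := by
            intro j
            split_ifs with hpj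
            · rw [← Finset.sum_filter]
              have hPeq : Finset.univ.filter (fun k => 0 < g (v k)) = P := by
                rw [hPdef]; ext k; simp [hp, not_le]
              rw [hPeq]
            · simp
          rw [Finset.sum_congr rfl fun j _ => hpull j, ← Finset.sum_filter, ← hNdef]
          have hinner : ∀ j ∈ N, ∑ k ∈ P, (μ j * μ k / S) • (g (v k) • v j - g (v j) • v k)
              = ((μ j * T) / S) • v j + ((-(μ j * g (v j))) / S) • z := by
            intro j hj
            have e1 : ∀ k ∈ P, (μ j * μ k / S) • (g (v k) • v j - g (v j) • v k)
                = ((μ j * (μ k * g (v k))) / S) • v j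
                  + ((-(μ j * g (v j))) / S) • (μ k • v k) := by
              intro k hk
              match_scalars <;> ring
            rw [Finset.sum_congr rfl e1, Finset.sum_add_distrib, ← Finset.sum_smul,
              ← Finset.smul_sum, ← hz]
            have hsc : (∑ k ∈ P, μ j * (μ k * g (v k)) / S) = μ j * T / S := by
              rw [hT, Finset.mul_sum, Finset.sum_div]
            rw [hsc]
          rw [Finset.sum_congr rfl hinner, Finset.sum_add_distrib, ← Finset.sum_smul]
          have hcoef : ∑ j ∈ N, (-(μ j * g (v j))) / S = 1 := by
            rw [← Finset.sum_div, ← hS, div_self (ne_of_gt hSpos)]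
          rw [hcoef, one_smul]
          congr 1
          rw [hy, Finset.smul_sum]
          refine Finset.sum_congr rfl fun j hj => ?_
          match_scalars <;> ring
        simp only [Sum.elim_inl, Sum.elim_inr]
        rw [hleft, hright, ← hyz, sub_smul, one_smul]
        abel
  · intro x hx
    exact ⟨coneIdx_subset_coneIdx hwmem hx, apply_nonpos_of_mem_coneIdx g hwneg hx⟩

lemma map_coneIdx (f : V →ₗ[ℝ] W) {ι : Type*} [Fintype ι] (v : ι → V) :
    f '' coneIdx v = coneIdx (f ∘ v) := by
  ext x
  constructor
  · rintro ⟨y, ⟨μ, hμ, rfl⟩, rfl⟩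
    exact ⟨μ, hμ, by simp [map_sum]⟩
  · rintro ⟨μ, hμ, rfl⟩
    exact ⟨∑ j, μ j • v j, ⟨μ, hμ, rfl⟩, by simp [map_sum]⟩

-- placeholders for already-proven lemmas

lemma univ_eq_coneIdx [FiniteDimensional ℝ V] :
    ∃ (n : ℕ) (w : Fin n → V), (Set.univ : Set V) = coneIdx w := by
  classical
  set b := Module.finBasis ℝ V with hb
  set n := Module.finrank ℝ V with hn
  set w : (Fin n) ⊕ (Fin n) → V := Sum.elim (fun i => b i) (fun i => -(b i)) with hw
  suffices h : (Set.univ : Set V) = coneIdx w by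
    exact ⟨_, w ∘ (Fintype.equivFin _).symm, by rw [h, coneIdx_reindex]⟩
  apply Set.eq_of_subset_of_subset _ (Set.subset_univ _)
  intro x _
  refine ⟨Sum.elim (fun i => max (b.repr x i) 0) (fun i => max (-(b.repr x i)) 0),
    ?_, ?_⟩
  · rintro (i | i) <;> simp [le_max_right]
  · rw [Fintype.sum_sum_type]
    simp only [Sum.elim_inl, Sum.elim_inr, hw]
    rw [← Finset.sum_add_distrib]
    have : ∀ i : Fin n, max (b.repr x i) 0 • b i + max (-(b.repr x i)) 0 • -(b i)
        = b.repr x i • b i := by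
      intro i
      rw [smul_neg, ← sub_eq_add_neg, ← sub_smul, max_zero_sub_max_neg_zero_eq_self]
    rw [Finset.sum_congr rfl fun i _ => this i]
    exact (b.sum_repr x).symm

/-- A polyhedral cone in a finite-dimensional space is finitely generated. -/
lemma polyhedral_cone_fg [FiniteDimensional ℝ V] :
    ∀ (p : ℕ) (f : Fin p → (V →ₗ[ℝ] ℝ)),
    ∃ (n : ℕ) (w : Fin n → V), {x | ∀ i, f i x ≤ 0} = coneIdx w := by
  intro p
  induction p with
  | zero =>
    intro f
    obtain ⟨n, w, hw⟩ := univ_eq_coneIdx (V := V)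
    exact ⟨n, w, by rw [← hw]; ext x; simp [Fin.forall_fin_zero_pi]⟩
  | succ p ih =>
    intro f
    obtain ⟨n, w, hw⟩ := ih (fun i => f i.castSucc)
    obtain ⟨m, w', hw'⟩ := coneIdx_inter_halfspace w (f (Fin.last p))
    refine ⟨m, w', ?_⟩
    rw [← hw', ← hw]
    ext x
    simp only [Set.mem_setOf_eq, Set.mem_inter_iff]
    constructor
    · intro h
      exact ⟨fun i => h i.castSucc, h (Fin.last p)⟩
    · rintro ⟨h1, h2⟩ i
      refine Fin.lastCases h2 (fun i => h1 i) i

/-- A finitely generated cone in a finite-dimensional space is polyhedral. -/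
lemma coneIdx_eq_polyhedral [FiniteDimensional ℝ V] {ι : Type*} [Fintype ι] (v : ι → V) :
    ∃ (p : ℕ) (f : Fin p → (V →ₗ[ℝ] ℝ)), coneIdx v = {x | ∀ i, f i x ≤ 0} := by
  classical
  set e := Fintype.equivFin ι with he
  obtain ⟨n, b, hb⟩ := polyhedral_cone_fg (V := Module.Dual ℝ V) (Fintype.card ι)
    (fun i => (Module.Dual.eval ℝ V) (v (e.symm i)))
  have hbset : {f : Module.Dual ℝ V | ∀ j : ι, f (v j) ≤ 0} = coneIdx b := by
    rw [← hb]
    ext f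
    simp only [Set.mem_setOf_eq, Module.Dual.eval_apply]
    constructor
    · intro h i; exact h _
    · intro h j; simpa using h (e j)
  refine ⟨n, b, ?_⟩
  ext x
  simp only [Set.mem_setOf_eq]
  constructor
  · intro hx i
    have hbi : (b i) ∈ {f : Module.Dual ℝ V | ∀ j : ι, f (v j) ≤ 0} := by
      rw [hbset]; exact mem_coneIdx_self b i
    exact apply_nonpos_of_mem_coneIdx (b i) hbi hx
  · intro hx
    by_contra hxc
    have hxc' : x ∉ coneIdx (v ∘ e.symm) := by rw [coneIdx_reindex]; exact hxc
    obtain ⟨f, hf, hfx⟩ := farkas _ (v ∘ e.symm) x hxc'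
    have hfD : f ∈ {f : Module.Dual ℝ V | ∀ j : ι, f (v j) ≤ 0} := by
      intro j
      simpa using hf (e j)
    rw [hbset] at hfD
    obtain ⟨γ, hγ, hfeq⟩ := hfD
    have : f x ≤ 0 := by
      rw [hfeq]
      rw [LinearMap.sum_apply]
      refine Finset.sum_nonpos fun m _ => ?_
      rw [LinearMap.smul_apply, smul_eq_mul]
      exact mul_nonpos_of_nonneg_of_nonpos (hγ m) (hx m)
    linarith

/-- Minkowski: a nonempty polyhedron in a finite-dimensional space is the sum of a
polytope and a finitely generated cone. -/
lemma polyhedron_eq_add [FiniteDimensional ℝ V] (p : ℕ) (f : Fin p → (V →ₗ[ℝ] ℝ))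
    (α : Fin p → ℝ) :
    ∃ (k ℓ : ℕ) (u : Fin k → V) (w : Fin ℓ → V),
      {x | ∀ i, f i x ≤ α i}
        = convexHull ℝ (Set.range u) + coneIdx w := by
  classical
  set F : Fin (p + 1) → ((V × ℝ) →ₗ[ℝ] ℝ) :=
    Fin.snoc (fun i => f i ∘ₗ LinearMap.fst ℝ V ℝ - α i • LinearMap.snd ℝ V ℝ)
      (-(LinearMap.snd ℝ V ℝ)) with hF
  have hFapp : ∀ (i : Fin p) (z : V × ℝ), F i.castSucc z = f i z.1 - α i * z.2 := by
    intro i z; simp [hF, Fin.snoc_castSucc]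
  have hFlast : ∀ z : V × ℝ, F (Fin.last p) z = -z.2 := by
    intro i; simp [hF]
  have hCmem : ∀ z : V × ℝ, (∀ i, F i z ≤ 0) ↔ ((∀ i : Fin p, f i z.1 ≤ α i * z.2) ∧ 0 ≤ z.2) := by
    intro z
    constructor
    · intro h
      refine ⟨fun i => by have := h i.castSucc; rw [hFapp] at this; linarith, ?_⟩
      have := h (Fin.last p); rw [hFlast] at this; linarith
    · rintro ⟨h1, h2⟩ i
      refine Fin.lastCases ?_ (fun i => ?_) i
      · rw [hFlast]; linarith
      · rw [hFapp]; have := h1 i; linarith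
  obtain ⟨n, g, hg⟩ := polyhedral_cone_fg (V := V × ℝ) (p + 1) F
  -- generators have nonnegative last coordinate
  have hgC : ∀ m, ∀ i, F i (g m) ≤ 0 := by
    intro m
    have : g m ∈ {z : V × ℝ | ∀ i, F i z ≤ 0} := by rw [hg]; exact mem_coneIdx_self g m
    exact this
  have hgt : ∀ m, 0 ≤ (g m).2 := fun m => ((hCmem (g m)).mp (hgC m)).2
  set q : Fin n → Prop := fun m => 0 < (g m).2 with hq
  set u : {m // q m} → V := fun m => ((g m.1).2)⁻¹ • (g m.1).1 with hu
  set w : {m // ¬ q m} → V := fun m => (g m.1).1 with hwdef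
  have hzero : ∀ m : {m // ¬ q m}, (g m.1).2 = 0 := by
    intro m
    have h1 := hgt m.1
    have h2 : ¬ (0 < (g m.1).2) := m.2
    push_neg at h2
    linarith
  suffices hmain : {x | ∀ i, f i x ≤ α i} = convexHull ℝ (Set.range u) + coneIdx w by
    refine ⟨_, _, u ∘ (Fintype.equivFin _).symm, w ∘ (Fintype.equivFin _).symm, ?_⟩
    rw [Set.range_comp, Equiv.range_eq_univ, Set.image_univ, coneIdx_reindex, hmain]
  ext x
  simp only [Set.mem_setOf_eq]
  constructor
  · -- x in polyhedron → decomposition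
    intro hx
    have hxC : (x, (1:ℝ)) ∈ coneIdx g := by
      rw [← hg]
      exact (hCmem _).mpr ⟨by simpa using hx, by norm_num⟩
    obtain ⟨μ, hμ, hsum⟩ := hxC
    have hfst : x = ∑ m, μ m • (g m).1 := by
      have := congrArg Prod.fst hsum
      simpa [Prod.fst_sum] using this
    have hsnd : (1:ℝ) = ∑ m, μ m * (g m).2 := by
      have := congrArg Prod.snd hsum
      simpa [Prod.snd_sum, smul_eq_mul] using this
    rw [Set.mem_add]
    refine ⟨∑ m : {m // q m}, (μ m.1 * (g m.1).2) • u m, ?_,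
      ∑ m : {m // ¬ q m}, μ m.1 • w m, ?_, ?_⟩
    · -- convex hull membership
      have h0 : ∑ m ∈ Finset.univ.filter (fun m => ¬ q m), μ m * (g m).2 = 0 := by
        refine Finset.sum_eq_zero fun m hm => ?_
        have : (g m).2 = 0 := hzero ⟨m, (Finset.mem_filter.mp hm).2⟩
        rw [this, mul_zero]
      have hsum1 : ∑ m : {m // q m}, μ m.1 * (g m.1).2 = 1 := by
        rw [← Finset.sum_subtype (p := q) (Finset.univ.filter fun m => q m) (fun x => by simp)
          (fun m => μ m * (g m).2), hsnd,
          ← Finset.sum_filter_add_sum_filter_not Finset.univ q (fun m => μ m * (g m).2),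
          h0, add_zero]
      have := Finset.centerMass_mem_convexHull (Finset.univ : Finset {m // q m})
        (fun m _ => mul_nonneg (hμ m.1) (hgt m.1)) (by rw [hsum1]; norm_num)
        (fun m _ => Set.mem_range_self (f := u) m)
      rwa [Finset.centerMass_eq_of_sum_1 _ _ hsum1] at this
    · exact ⟨fun m => μ m.1, fun m => hμ m.1, rfl⟩
    · -- the sums add up to x
      rw [hfst, ← Finset.sum_filter_add_sum_filter_not Finset.univ q (fun m => μ m • (g m).1)]
      congr 1
      · rw [Finset.sum_subtype (p := q) (Finset.univ.filter fun m => q m) (fun x => by simp)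
          (fun m => μ m • (g m).1)]
        refine Finset.sum_congr rfl fun m _ => ?_
        have hpos : (0:ℝ) < (g m.1).2 := m.2
        have hne : ((g m.1).2) ≠ 0 := ne_of_gt hpos
        rw [hu, smul_smul]
        congr 1
        field_simp
      · rw [Finset.sum_subtype (p := fun m => ¬ q m) (Finset.univ.filter fun m => ¬ q m)
          (fun x => by simp) (fun m => μ m • (g m).1)]
  · -- decomposition → x in polyhedron
    rintro hx
    rw [Set.mem_add] at hx
    obtain ⟨y, hy, z, hz, rfl⟩ := hx
    have hyC : ∀ i, F i (y, (1:ℝ)) ≤ 0 := by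
      have hconv : Convex ℝ {y : V | ∀ i, F i (y, (1:ℝ)) ≤ 0} := by
        intro y₁ h₁ y₂ h₂ a b ha hb hab
        intro i
        have : ((a • y₁ + b • y₂ : V), (1:ℝ)) = a • (y₁, (1:ℝ)) + b • (y₂, (1:ℝ)) := by
          simp [Prod.ext_iff, hab]
        rw [this, map_add, map_smul, map_smul, smul_eq_mul, smul_eq_mul]
        have := h₁ i; have := h₂ i
        nlinarith [h₁ i, h₂ i]
      have hsub : Set.range u ⊆ {y : V | ∀ i, F i (y, (1:ℝ)) ≤ 0} := by
        rintro _ ⟨m, rfl⟩ i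
        have hpos : 0 < (g m.1).2 := m.2
        have : ((u m : V), (1:ℝ)) = ((g m.1).2)⁻¹ • g m.1 := by
          rw [hu]
          ext
          · simp
          · simp [inv_mul_cancel₀ (ne_of_gt hpos)]
        rw [this, map_smul, smul_eq_mul]
        have := hgC m.1 i
        have hinv : (0:ℝ) ≤ ((g m.1).2)⁻¹ := by positivity
        exact mul_nonpos_of_nonneg_of_nonpos hinv (hgC m.1 i)
      exact convexHull_min hsub hconv hy
    have hzC : ∀ i, F i (z, (0:ℝ)) ≤ 0 := by
      obtain ⟨μ, hμ, rfl⟩ := hz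
      intro i
      have : ((∑ m : {m // ¬ q m}, μ m • w m : V), (0:ℝ))
          = ∑ m : {m // ¬ q m}, μ m • g m.1 := by
        ext
        · simp [hwdef, Prod.fst_sum]
        · simp only [Prod.snd_sum, Prod.smul_snd, smul_eq_mul]
          refine (Finset.sum_eq_zero fun m _ => ?_).symm
          rw [hzero m, mul_zero]
      rw [this, map_sum]
      refine Finset.sum_nonpos fun m _ => ?_
      rw [map_smul, smul_eq_mul]
      exact mul_nonpos_of_nonneg_of_nonpos (hμ m) (hgC m.1 i)
    intro i
    have h1 := hyC i.castSucc
    have h2 := hzC i.castSucc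
    rw [hFapp] at h1 h2
    simp only at h1 h2
    have : f i (y + z) = f i y + f i z := map_add _ _ _
    rw [this]
    linarith

/-- Weyl: the sum of a polytope and a f.g. cone in a finite-dimensional space
is a polyhedron. -/
lemma add_eq_polyhedron [FiniteDimensional ℝ V] {ι κ : Type*} [Fintype ι] [Fintype κ]
    [Nonempty ι] (u : ι → V) (w : κ → V) :
    ∃ (p : ℕ) (f : Fin p → (V →ₗ[ℝ] ℝ)) (α : Fin p → ℝ),
      convexHull ℝ (Set.range u) + coneIdx w = {x | ∀ i, f i x ≤ α i} := by
  classical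
  set g : ι ⊕ κ → V × ℝ := Sum.elim (fun i => (u i, 1)) (fun j => (w j, 0)) with hgdef
  obtain ⟨p, F, hF⟩ := coneIdx_eq_polyhedral (V := V × ℝ) g
  refine ⟨p, fun m => F m ∘ₗ LinearMap.inl ℝ V ℝ, fun m => -(F m (0, 1)), ?_⟩
  have hslice : ∀ x : V, (∀ m, (F m ∘ₗ LinearMap.inl ℝ V ℝ) x ≤ -(F m (0, 1)))
      ↔ (x, (1:ℝ)) ∈ coneIdx g := by
    intro x
    rw [hF]
    simp only [Set.mem_setOf_eq, LinearMap.comp_apply, LinearMap.inl_apply]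
    constructor
    · intro h m
      have : ((x, (1:ℝ)) : V × ℝ) = (x, 0) + (0, 1) := by simp
      rw [this, map_add]
      linarith [h m]
    · intro h m
      have : ((x, (0:ℝ)) : V × ℝ) = (x, 1) - (0, 1) := by simp
      rw [this, map_sub]
      linarith [h m]
  ext x
  simp only [Set.mem_setOf_eq]
  rw [show (∀ m, (F m ∘ₗ LinearMap.inl ℝ V ℝ) x ≤ -(F m (0, 1))) ↔ (x, (1:ℝ)) ∈ coneIdx g
    from hslice x]
  constructor
  · rintro hx
    rw [Set.mem_add] at hx
    obtain ⟨y, hy, z, hz, rfl⟩ := hx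
    -- (y,1) ∈ coneIdx g
    have hyC : ((y, (1:ℝ)) : V × ℝ) ∈ coneIdx g := by
      have hconv : Convex ℝ {y : V | ((y, (1:ℝ)) : V × ℝ) ∈ coneIdx g} := by
        intro y₁ h₁ y₂ h₂ a b ha hb hab
        obtain ⟨μ₁, hμ₁, hs₁⟩ := h₁
        obtain ⟨μ₂, hμ₂, hs₂⟩ := h₂
        refine ⟨fun m => a * μ₁ m + b * μ₂ m, fun m =>
          add_nonneg (mul_nonneg ha (hμ₁ m)) (mul_nonneg hb (hμ₂ m)), ?_⟩
        have : ((a • y₁ + b • y₂ : V), (1:ℝ)) = a • ((y₁, (1:ℝ)) : V × ℝ) + b • (y₂, 1) := by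
          simp [Prod.ext_iff, hab]
        rw [this, hs₁, hs₂, Finset.smul_sum, Finset.smul_sum, ← Finset.sum_add_distrib]
        refine Finset.sum_congr rfl fun m _ => ?_
        rw [smul_smul, smul_smul, add_smul]
      have hsub : Set.range u ⊆ {y : V | ((y, (1:ℝ)) : V × ℝ) ∈ coneIdx g} := by
        rintro _ ⟨i, rfl⟩
        have : ((u i, (1:ℝ)) : V × ℝ) = g (Sum.inl i) := by simp [hgdef]
        rw [Set.mem_setOf_eq, this]
        exact mem_coneIdx_self g _
      exact convexHull_min hsub hconv hy
    have hzC : ((z, (0:ℝ)) : V × ℝ) ∈ coneIdx g := by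
      obtain ⟨μ, hμ, rfl⟩ := hz
      refine ⟨Sum.elim 0 μ, ?_, ?_⟩
      · rintro (m | m)
        · simp
        · simpa using hμ m
      rw [Fintype.sum_sum_type]
      simp only [Sum.elim_inl, Sum.elim_inr, Pi.zero_apply, zero_smul,
        Finset.sum_const_zero, zero_add, hgdef]
      ext
      · simp [Prod.fst_sum]
      · simp [Prod.snd_sum]
    obtain ⟨μ₁, hμ₁, hs₁⟩ := hyC
    obtain ⟨μ₂, hμ₂, hs₂⟩ := hzC
    refine ⟨μ₁ + μ₂, fun m => add_nonneg (hμ₁ m) (hμ₂ m), ?_⟩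
    have : ((y + z, (1:ℝ)) : V × ℝ) = (y, 1) + (z, 0) := by simp
    rw [this, hs₁, hs₂, ← Finset.sum_add_distrib]
    exact Finset.sum_congr rfl fun m _ => by rw [Pi.add_apply, add_smul]
  · rintro ⟨μ, hμ, hsum⟩
    rw [Fintype.sum_sum_type] at hsum
    simp only [hgdef, Sum.elim_inl, Sum.elim_inr] at hsum
    have hfst : x = ∑ i, μ (Sum.inl i) • u i + ∑ j, μ (Sum.inr j) • w j := by
      have := congrArg Prod.fst hsum
      simpa [Prod.fst_sum] using this
    have hsnd : (1:ℝ) = ∑ i, μ (Sum.inl i) := by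
      have := congrArg Prod.snd hsum
      simpa [Prod.snd_sum, smul_eq_mul] using this
    rw [Set.mem_add]
    refine ⟨∑ i, μ (Sum.inl i) • u i, ?_, ∑ j, μ (Sum.inr j) • w j,
      ⟨fun j => μ (Sum.inr j), fun j => hμ _, rfl⟩, hfst.symm⟩
    have := Finset.centerMass_mem_convexHull (Finset.univ : Finset ι)
      (fun i _ => hμ (Sum.inl i)) (by rw [← hsnd]; norm_num)
      (fun i _ => Set.mem_range_self (f := u) i)
    rwa [Finset.centerMass_eq_of_sum_1 _ _ hsnd.symm] at this

/-- image of a pointwise sum of sets under an additive map -/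
lemma image_add_set (f : V →ₗ[ℝ] W) (A B : Set V) : f '' (A + B) = f '' A + f '' B := by
  ext x
  constructor
  · rintro ⟨y, hy, rfl⟩
    rw [Set.mem_add] at hy
    obtain ⟨a, ha, b, hb, rfl⟩ := hy
    rw [map_add]
    exact Set.add_mem_add (Set.mem_image_of_mem f ha) (Set.mem_image_of_mem f hb)
  · rintro hx
    rw [Set.mem_add] at hx
    obtain ⟨_, ⟨a, ha, rfl⟩, _, ⟨b, hb, rfl⟩, rfl⟩ := hx
    exact ⟨a + b, Set.add_mem_add ha hb, map_add f a b⟩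


end ConeLemmas

section MainProof
variable {X' : Type*} [AddCommGroup X'] [Module ℝ X'] [TopologicalSpace X']

lemma preimage_mkQ_image (X₀ : Submodule ℝ X') (S : Set X') :
    X₀.mkQ ⁻¹' (X₀.mkQ '' S) = S + (X₀ : Set X') := by
  ext x
  simp only [Set.mem_preimage, Set.mem_image]
  constructor
  · rintro ⟨s, hs, hsx⟩
    rw [Set.mem_add]
    refine ⟨s, hs, x - s, ?_, by abel⟩
    rw [SetLike.mem_coe, ← Submodule.ker_mkQ X₀, LinearMap.mem_ker, map_sub, hsx, sub_self]
  · intro hx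
    rw [Set.mem_add] at hx
    obtain ⟨s, hs, w, hw, rfl⟩ := hx
    refine ⟨s, hs, ?_⟩
    rw [map_add]
    have : X₀.mkQ w = 0 := by
      rw [← LinearMap.mem_ker, Submodule.ker_mkQ]; exact hw
    rw [this, add_zero]
end MainProof


/-- A nonempty set is polyhedral convex iff it is the sum of a polytope, a
finitely generated cone, and a closed linear subspace of finite codimension. -/
theorem isPCS_iff_representation {X : Type*} [AddCommGroup X] [Module ℝ X] [TopologicalSpace X]
    [IsTopologicalAddGroup X] [ContinuousSMul ℝ X] [LocallyConvexSpace ℝ X] [T2Space X]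
    (D : Set X) (hne : D.Nonempty) :
    IsPCS D ↔
      ∃ (k ℓ : ℕ) (u : Fin k → X) (v : Fin ℓ → X) (X₀ : Submodule ℝ X),
        IsClosed (X₀ : Set X) ∧ FiniteDimensional ℝ (X ⧸ X₀) ∧
        D = convexHull ℝ (Set.range u) +
            {x | ∃ μ : Fin ℓ → ℝ, (∀ j, 0 ≤ μ j) ∧ x = ∑ j, μ j • v j} +
            (X₀ : Set X) := by
  constructor
  · rintro ⟨p, f, α, rfl⟩
    set φ : X →ₗ[ℝ] (Fin p → ℝ) := LinearMap.pi (fun i => (f i : X →ₗ[ℝ] ℝ)) with hφ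
    set X₀ : Submodule ℝ X := LinearMap.ker φ with hX₀
    have hclosed : IsClosed (X₀ : Set X) := by
      have : (X₀ : Set X) = ⋂ i, (f i) ⁻¹' {0} := by
        ext x
        simp [hX₀, hφ, LinearMap.mem_ker, funext_iff, LinearMap.pi_apply]
      rw [this]
      exact isClosed_iInter fun i => IsClosed.preimage (f i).continuous isClosed_singleton
    haveI hfd : FiniteDimensional ℝ (X ⧸ X₀) := Module.Finite.equiv φ.quotKerEquivRange.symm
    have hle : ∀ i, X₀ ≤ LinearMap.ker (f i : X →ₗ[ℝ] ℝ) := by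
      intro i x hx
      rw [hX₀, LinearMap.mem_ker] at hx
      rw [LinearMap.mem_ker]
      have := congrFun hx i
      simpa [hφ, LinearMap.pi_apply] using this
    set fbar : Fin p → ((X ⧸ X₀) →ₗ[ℝ] ℝ) := fun i => X₀.liftQ (f i : X →ₗ[ℝ] ℝ) (hle i)
      with hfbar
    have hcomm : ∀ i (x : X), fbar i (X₀.mkQ x) = f i x := by
      intro i x
      simp [hfbar, Submodule.liftQ_apply]
    obtain ⟨k, ℓ, ubar, wbar, hrep⟩ := polyhedron_eq_add (V := X ⧸ X₀) p fbar α
    obtain ⟨s, hs⟩ := X₀.mkQ.exists_rightInverse_of_surjective (Submodule.range_mkQ X₀)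
    have hsid : ∀ y : X ⧸ X₀, X₀.mkQ (s y) = y := by
      intro y
      have := congrArg (fun g => g y) hs
      simpa using this
    have hpre : ∀ A : Set (X ⧸ X₀), X₀.mkQ ⁻¹' A = s '' A + (X₀ : Set X) := by
      intro A
      have himg : X₀.mkQ '' (s '' A) = A := by
        rw [← Set.image_comp]
        have : X₀.mkQ ∘ s = id := by ext y; simp [hsid]
        rw [this, Set.image_id]
      rw [← preimage_mkQ_image X₀ (s '' A), himg]
    have hDpre : {x | ∀ i, f i x ≤ α i} = X₀.mkQ ⁻¹' {y | ∀ i, fbar i y ≤ α i} := by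
      ext x
      simp only [Set.mem_preimage, Set.mem_setOf_eq]
      constructor
      · intro h i; rw [hcomm]; exact h i
      · intro h i; rw [← hcomm i x]; exact h i
    refine ⟨k, ℓ, s ∘ ubar, s ∘ wbar, X₀, hclosed, hfd, ?_⟩
    rw [hDpre, hrep, hpre, image_add_set]
    congr 1
    congr 1
    · rw [s.image_convexHull, ← Set.range_comp]
    · exact map_coneIdx s wbar
  · rintro ⟨k, ℓ, u, v, X₀, hclosed, hfd, hD⟩
    haveI : IsClosed ((X₀ : Submodule ℝ X) : Set X) := hclosed
    haveI : T3Space (X ⧸ X₀) := Submodule.t3_quotient_of_isClosed X₀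
    have hk : k ≠ 0 := by
      rintro rfl
      rw [show Set.range u = ∅ from Set.range_eq_empty u] at hD
      simp only [convexHull_empty, Set.empty_add] at hD
      exact Set.not_nonempty_empty (hD ▸ hne)
    haveI : Nonempty (Fin k) := ⟨⟨0, Nat.pos_of_ne_zero hk⟩⟩
    set π := X₀.mkQ with hπ
    have hcone : {x | ∃ μ : Fin ℓ → ℝ, (∀ j, 0 ≤ μ j) ∧ x = ∑ j, μ j • v j} = coneIdx v := rfl
    rw [hcone] at hD
    set S : Set X := convexHull ℝ (Set.range u) + coneIdx v with hS
    have hDpre : D = π ⁻¹' (π '' S) := by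
      rw [preimage_mkQ_image, hD]
    have himg : π '' S = convexHull ℝ (Set.range (π ∘ u)) + coneIdx (π ∘ v) := by
      rw [hS, image_add_set, (π : X →ₗ[ℝ] X ⧸ X₀).image_convexHull, ← Set.range_comp,
        map_coneIdx]
    obtain ⟨p, F, α, hrep⟩ := add_eq_polyhedron (π ∘ u) (π ∘ v)
    refine ⟨p, fun i => ⟨F i ∘ₗ (π : X →ₗ[ℝ] X ⧸ X₀), ?_⟩, α, ?_⟩
    · exact ((F i).continuous_of_finiteDimensional).comp continuous_quot_mk
    · rw [hDpre, himg, hrep]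
      rfl
end

section
/- If D₁ ⊆ X is a polyhedral convex set, D₂ ⊆ X is a generalized polyhedral convex set, and D₁ ∩ D₂ = ∅, then there exists a continuous linear functional x* on X such that sup{⟨x*, u⟩ | u ∈ D₁} < inf{⟨x*, v⟩ | v ∈ D₂} (strong separation). -/
open Pointwise

section AuxSep

open Finset

variable {H : Type*} [NormedAddCommGroup H] [NormedSpace ℝ H] [FiniteDimensional ℝ H]
variable {κ : Type*} [Fintype κ]

/-- The cone generated by a finite family, with coefficient support in `s`. -/
def coneS (w : κ → H) (s : Finset κ) : Set H :=
  {x | ∃ c : κ → ℝ, (∀ k, 0 ≤ c k) ∧ (∀ k ∉ s, c k = 0) ∧ x = ∑ k, c k • w k}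

lemma carath_aux (w : κ → H) :
    ∀ (n : ℕ) (s : Finset κ), s.card ≤ n →
      ∀ x ∈ coneS w s, ∃ t : Finset κ,
        LinearIndependent ℝ (fun k : t => w k) ∧ x ∈ coneS w t := by
  intro n
  induction n with
  | zero =>
    intro s hs x hx
    have : s = ∅ := Finset.card_eq_zero.mp (Nat.le_zero.mp hs)
    subst this
    exact ⟨∅, linearIndependent_empty_type, hx⟩
  | succ n ih =>
    intro s hs x hx
    by_cases hli : LinearIndependent ℝ (fun k : s => w k)
    · exact ⟨s, hli, hx⟩
    · obtain ⟨c, hc0, hcs, hcx⟩ := hx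
      obtain ⟨g, hgsum, i₁, hgi₁⟩ := Fintype.not_linearIndependent_iff.mp hli
      classical
      -- extend g to κ
      set g' : κ → ℝ := fun k => if h : k ∈ s then g ⟨k, h⟩ else 0 with hg'
      have hg'sum : ∑ k, g' k • w k = 0 := by
        rw [← Finset.sum_subset (Finset.subset_univ s)
          (by intro k _ hk; simp [hg', dif_neg hk])]
        rw [← hgsum, ← Finset.sum_coe_sort s (fun k => g' k • w k)]
        exact Finset.sum_congr rfl (by intro k _; simp [hg'])
      have hg'ne : g' (i₁ : κ) ≠ 0 := by simp [hg', i₁.2, hgi₁]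
      -- wlog some positive coefficient on s
      obtain ⟨d, hdsum, hds, k₁, hk₁s, hk₁pos⟩ :
          ∃ d : κ → ℝ, (∑ k, d k • w k = 0) ∧ (∀ k ∉ s, d k = 0) ∧
            ∃ k₁, k₁ ∈ s ∧ 0 < d k₁ := by
        rcases lt_or_gt_of_ne hg'ne with hneg | hpos
        · refine ⟨-g', by simp [hg'sum], by intro k hk; simp [hg', dif_neg hk], i₁, i₁.2, by
            simpa using hneg⟩
        · exact ⟨g', hg'sum, by intro k hk; simp [hg', dif_neg hk], i₁, i₁.2, hpos⟩
      -- minimize ratio over positive d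
      set sp := s.filter (fun k => 0 < d k) with hsp
      have hspne : sp.Nonempty := ⟨k₁, by simp [hsp, hk₁s, hk₁pos]⟩
      obtain ⟨k₀, hk₀sp, hk₀min⟩ :=
        Finset.exists_min_image sp (fun k => c k / d k) hspne
      have hk₀s : k₀ ∈ s := (Finset.mem_filter.mp hk₀sp).1
      have hdk₀ : 0 < d k₀ := (Finset.mem_filter.mp hk₀sp).2
      set τ := c k₀ / d k₀ with hτ
      have hτ0 : 0 ≤ τ := div_nonneg (hc0 k₀) hdk₀.le
      set c' : κ → ℝ := fun k => c k - τ * d k with hc'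
      have hc'0 : ∀ k, 0 ≤ c' k := by
        intro k
        by_cases hk : k ∈ s
        · rcases le_or_gt (d k) 0 with hdk | hdk
          · have : τ * d k ≤ 0 := mul_nonpos_of_nonneg_of_nonpos hτ0 hdk
            simp only [hc']; linarith [hc0 k]
          · have hk' : k ∈ sp := Finset.mem_filter.mpr ⟨hk, hdk⟩
            have := hk₀min k hk'
            have : τ * d k ≤ c k := by
              rw [hτ] at this ⊢
              calc c k₀ / d k₀ * d k ≤ c k / d k * d k := by
                    exact mul_le_mul_of_nonneg_right this hdk.le
                _ = c k := div_mul_cancel₀ _ hdk.ne'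
            simp only [hc']; linarith
        · simp only [hc', hds k hk, hcs k hk]; simp
      have hc'k₀ : c' k₀ = 0 := by
        simp only [hc', hτ]; field_simp; ring
      have hc's : ∀ k ∉ s.erase k₀, c' k = 0 := by
        intro k hk
        rw [Finset.mem_erase] at hk
        push_neg at hk
        by_cases hks : k ∈ s
        · have hkk : k = k₀ := by by_contra h; exact (hk h) hks
          rw [hkk, hc'k₀]
        · simp only [hc', hds k hks, hcs k hks]; simp
      have hx' : x ∈ coneS w (s.erase k₀) := by
        refine ⟨c', hc'0, hc's, ?_⟩
        have : ∑ k, c' k • w k = (∑ k, c k • w k) - τ • ∑ k, d k • w k := by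
          rw [Finset.smul_sum, ← Finset.sum_sub_distrib]
          refine Finset.sum_congr rfl (fun k _ => ?_)
          simp only [hc', sub_smul, smul_smul]
        rw [hcx]
        rw [this, hdsum, smul_zero, sub_zero]
      have hcard : (s.erase k₀).card ≤ n := by
        have := Finset.card_erase_of_mem hk₀s
        omega
      exact ih (s.erase k₀) hcard x hx'

lemma coneS_closed_of_li (w : κ → H) (s : Finset κ)
    (hli : LinearIndependent ℝ (fun k : s => w k)) : IsClosed (coneS w s) := by
  classical
  set φ : (s → ℝ) →ₗ[ℝ] H :=
    { toFun := fun c => ∑ k : s, c k • w k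
      map_add' := by intro a b; simp [add_smul, Finset.sum_add_distrib]
      map_smul' := by intro r a; simp [smul_smul, Finset.smul_sum] } with hφ
  have hinj : LinearMap.ker φ = ⊥ := by
    rw [LinearMap.ker_eq_bot']
    intro c hc
    exact funext fun k => Fintype.linearIndependent_iff.mp hli c hc k
  have hce := LinearMap.isClosedEmbedding_of_injective hinj
  have horth : IsClosed {c : s → ℝ | ∀ k, 0 ≤ c k} := by
    have : {c : s → ℝ | ∀ k, 0 ≤ c k} = ⋂ k, {c | 0 ≤ c k} := by
      ext c; simp [Set.mem_iInter]
    rw [this]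
    exact isClosed_iInter fun k =>
      isClosed_le continuous_const (continuous_apply k)
  have himg : coneS w s = φ '' {c : s → ℝ | ∀ k, 0 ≤ c k} := by
    ext x
    constructor
    · rintro ⟨c, hc0, hcs, rfl⟩
      refine ⟨fun k => c k, fun k => hc0 k, ?_⟩
      simp only [hφ, LinearMap.coe_mk, AddHom.coe_mk]
      change ∑ k : s, c k • w k = _
      rw [Finset.sum_coe_sort s (fun k => c k • w k)]
      exact Finset.sum_subset (Finset.subset_univ s)
        (fun k _ hk => by rw [hcs k hk, zero_smul])
    · rintro ⟨c, hc0, rfl⟩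
      refine ⟨fun k => if h : k ∈ s then c ⟨k, h⟩ else 0,
        fun k => by by_cases h : k ∈ s <;> simp [h, hc0 ⟨k, _⟩] <;> exact hc0 _,
        fun k hk => by simp [dif_neg hk], ?_⟩
      simp only [hφ, LinearMap.coe_mk, AddHom.coe_mk]
      change ∑ k : s, c k • w k = _
      rw [← Finset.sum_subset (Finset.subset_univ s)
        (by intro k _ hk; simp [dif_neg hk])]
      rw [← Finset.sum_coe_sort s]
      exact Finset.sum_congr rfl (by intro k _; simp)
  rw [himg]
  exact hce.isClosedMap _ horth

/-- A finitely generated convex cone in a finite-dimensional normed space is closed. -/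
lemma fgCone_closed (w : κ → H) :
    IsClosed {x : H | ∃ c : κ → ℝ, (∀ k, 0 ≤ c k) ∧ x = ∑ k, c k • w k} := by
  classical
  have hU : {x : H | ∃ c : κ → ℝ, (∀ k, 0 ≤ c k) ∧ x = ∑ k, c k • w k}
      = ⋃ s ∈ {s : Finset κ | LinearIndependent ℝ (fun k : s => w k)}, coneS w s := by
    ext x
    simp only [Set.mem_iUnion, Set.mem_setOf_eq]
    constructor
    · rintro ⟨c, hc0, rfl⟩
      have hx : (∑ k, c k • w k) ∈ coneS w Finset.univ :=
        ⟨c, hc0, fun k hk => absurd (Finset.mem_univ k) hk, rfl⟩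
      obtain ⟨t, hli, hxt⟩ := carath_aux w Finset.univ.card Finset.univ le_rfl _ hx
      exact ⟨t, hli, hxt⟩
    · rintro ⟨s, _, c, hc0, _, rfl⟩
      exact ⟨c, hc0, rfl⟩
  rw [hU]
  exact Set.Finite.isClosed_biUnion (Set.toFinite _)
    (fun s hs => coneS_closed_of_li w s hs)

lemma fgCone_convex (w : κ → H) :
    Convex ℝ {x : H | ∃ c : κ → ℝ, (∀ k, 0 ≤ c k) ∧ x = ∑ k, c k • w k} := by
  rintro x ⟨c, hc0, rfl⟩ y ⟨c', hc'0, rfl⟩ a b ha hb _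
  refine ⟨fun k => a * c k + b * c' k,
    fun k => add_nonneg (mul_nonneg ha (hc0 k)) (mul_nonneg hb (hc'0 k)), ?_⟩
  rw [Finset.smul_sum, Finset.smul_sum, ← Finset.sum_add_distrib]
  exact Finset.sum_congr rfl fun k _ => by
    simp [add_smul, smul_smul]

lemma fgCone_sep (w : κ → H) (y : H)
    (hy : y ∉ {x : H | ∃ c : κ → ℝ, (∀ k, 0 ≤ c k) ∧ x = ∑ k, c k • w k}) :
    ∃ F : H →L[ℝ] ℝ, (∀ k, 0 ≤ F (w k)) ∧ F y < 0 := by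
  classical
  set C := {x : H | ∃ c : κ → ℝ, (∀ k, 0 ≤ c k) ∧ x = ∑ k, c k • w k} with hC
  obtain ⟨F, u, hFy, hFC⟩ :=
    geometric_hahn_banach_point_closed (fgCone_convex w) (fgCone_closed w) hy
  have h0C : (0 : H) ∈ C := ⟨0, fun k => le_rfl, by simp⟩
  have hu0 : u < 0 := by simpa using hFC 0 h0C
  have hsmul : ∀ x ∈ C, ∀ t : ℝ, 0 ≤ t → t • x ∈ C := by
    rintro x ⟨c, hc0, rfl⟩ t ht
    exact ⟨fun k => t * c k, fun k => mul_nonneg ht (hc0 k), by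
      rw [Finset.smul_sum]; exact Finset.sum_congr rfl fun k _ => by
        simp [smul_smul]⟩
  refine ⟨F, fun k => ?_, lt_trans hFy hu0⟩
  have hwk : w k ∈ C := ⟨fun j => if j = k then 1 else 0,
    fun j => by dsimp only; split <;> norm_num, by
      simp only [ite_smul, one_smul, zero_smul]
      rw [Finset.sum_ite_eq' Finset.univ k w]
      simp⟩
  by_contra hneg
  push_neg at hneg
  have ht : 0 < (u - 1) / F (w k) := div_pos_iff.mpr (Or.inr ⟨by linarith, hneg⟩)
  have := hFC _ (hsmul _ hwk _ ht.le)
  rw [map_smul, smul_eq_mul, div_mul_cancel₀ _ (ne_of_lt hneg)] at this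
  linarith

section Farkas

variable {ι : Type*} [Fintype ι]

/-- dot product on a finite Pi space -/
def dotP (u v : ι → ℝ) : ℝ := ∑ i, u i * v i

lemma clm_eq_sum_coords [DecidableEq ι] (F : (ι → ℝ) →L[ℝ] ℝ) (z : ι → ℝ) :
    F z = ∑ i, z i * F (fun j => if i = j then 1 else 0) := by
  conv_lhs => rw [pi_eq_sum_univ z, map_sum]
  exact Finset.sum_congr rfl fun i _ => by rw [map_smul]; simp

/-- Farkas' lemma in a finite-dimensional coordinate space. -/
lemma farkas_s10 {κ : Type*} [Fintype κ] (a : κ → ι → ℝ) (b : κ → ℝ)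
    (hinf : ¬ ∃ x : ι → ℝ, ∀ k, dotP (a k) x ≤ b k) :
    ∃ l : κ → ℝ, (∀ k, 0 ≤ l k) ∧ (∀ i, ∑ k, l k * a k i = 0) ∧ ∑ k, l k * b k < 0 := by
  classical
  set wh : Option κ → (Option ι → ℝ) := fun ok =>
    Option.elim ok (fun o => Option.elim o 1 fun _ => 0)
      (fun k => fun o => Option.elim o (b k) fun i => a k i) with hwh
  set y : Option ι → ℝ := fun o => Option.elim o (-1) fun _ => 0 with hy
  by_cases hmem : y ∈ {x : Option ι → ℝ |
      ∃ c : Option κ → ℝ, (∀ k, 0 ≤ c k) ∧ x = ∑ k, c k • wh k}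
  · obtain ⟨c, hc0, hyc⟩ := hmem
    refine ⟨fun k => c (some k), fun k => hc0 _, ?_, ?_⟩
    · intro i
      have := congrFun hyc (some i)
      rw [Finset.sum_apply] at this
      rw [Fintype.sum_option] at this
      simp only [hwh, hy, Option.elim, Pi.smul_apply, smul_eq_mul] at this
      simp only [mul_zero, zero_add] at this
      linarith [this.symm]
    · have := congrFun hyc none
      rw [Finset.sum_apply] at this
      rw [Fintype.sum_option] at this
      simp only [hwh, hy, Option.elim, Pi.smul_apply, smul_eq_mul, mul_one] at this
      have hcn := hc0 none
      have : ∑ k, c (some k) * b k = -1 - c none := by linarith [this.symm]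
      rw [this]
      linarith
  · obtain ⟨F, hFw, hFy⟩ := fgCone_sep wh y hmem
    exfalso
    set e : Option ι → (Option ι → ℝ) := fun o => fun j => if o = j then 1 else 0 with he
    set t : ℝ := F (e none) with ht
    have hFyval : F y = -t := by
      rw [clm_eq_sum_coords F y, Fintype.sum_option]
      simp [hy, he, ht]
    have htpos : 0 < t := by
      rw [hFyval] at hFy; linarith
    set x : ι → ℝ := fun i => F (e (some i)) with hx
    have hk : ∀ k, 0 ≤ b k * t + dotP (a k) x := by
      intro k
      have := hFw (some k)
      rw [clm_eq_sum_coords F (wh (some k)), Fintype.sum_option] at this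
      simpa [hwh, he, ht, hx, dotP] using this
    refine hinf ⟨(-(1/t)) • x, fun k => ?_⟩
    have : dotP (a k) ((-(1/t)) • x) = (-(1/t)) * dotP (a k) x := by
      simp [dotP, Finset.mul_sum]
      exact Finset.sum_congr rfl fun i _ => by ring
    rw [this]
    have hc : (-(1/t)) ≤ 0 := neg_nonpos.mpr (by positivity)
    have h1 : (-(1/t)) * dotP (a k) x ≤ (-(1/t)) * (-(b k) * t) :=
      mul_le_mul_of_nonpos_left (by linarith [hk k]) hc
    calc (-(1/t)) * dotP (a k) x ≤ (-(1/t)) * (-(b k) * t) := h1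
      _ = b k := by field_simp
  
end Farkas

section Sep

variable {ι : Type*} [Fintype ι]

lemma dotP_sum_elim {ι' : Type*} [Fintype ι'] (u : ι → ℝ) (v : ι' → ℝ)
    (z : ι ⊕ ι' → ℝ) :
    dotP (Sum.elim u v) z = dotP u (z ∘ Sum.inl) + dotP v (z ∘ Sum.inr) := by
  simp [dotP, Fintype.sum_sum_type]

lemma dotP_swap {κ : Type*} [Fintype κ] (l : κ → ℝ) (a : κ → ι → ℝ) (z : ι → ℝ) :
    dotP (fun i => ∑ k, l k * a k i) z = ∑ k, l k * dotP (a k) z := by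
  simp only [dotP, Finset.sum_mul, Finset.mul_sum]
  rw [Finset.sum_comm]
  exact Finset.sum_congr rfl fun k _ => Finset.sum_congr rfl fun i _ => by ring

/-- Strong separation of two disjoint polyhedra in a finite coordinate space. -/
lemma polyhedra_sep {κ₁ κ₂ : Type*} [Fintype κ₁] [Fintype κ₂]
    (a : κ₁ → ι → ℝ) (α : κ₁ → ℝ) (a' : κ₂ → ι → ℝ) (β : κ₂ → ℝ)
    (hdisj : ¬ ∃ z : ι → ℝ, (∀ k, dotP (a k) z ≤ α k) ∧ (∀ k, dotP (a' k) z ≤ β k)) :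
    ∃ (η : ι → ℝ) (γ γ' : ℝ), γ < γ' ∧
      (∀ z, (∀ k, dotP (a k) z ≤ α k) → dotP η z ≤ γ) ∧
      (∀ z, (∀ k, dotP (a' k) z ≤ β k) → γ' ≤ dotP η z) := by
  classical
  set δ : ι → ι → ℝ := fun l => fun j => if l = j then 1 else 0 with hδ
  set A : (κ₁ ⊕ κ₂ ⊕ ι ⊕ ι) → (ι ⊕ ι) → ℝ := fun k =>
    Sum.elim (fun k₁ => Sum.elim (a k₁) 0)
      (Sum.elim (fun k₂ => Sum.elim 0 (a' k₂))
        (Sum.elim (fun l => Sum.elim (δ l) (-(δ l)))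
          (fun l => Sum.elim (-(δ l)) (δ l)))) k with hA
  set rhs : (κ₁ ⊕ κ₂ ⊕ ι ⊕ ι) → ℝ := fun k =>
    Sum.elim α (Sum.elim β (Sum.elim (fun _ => 0) (fun _ => 0))) k with hrhs
  have hinf : ¬ ∃ zz : (ι ⊕ ι) → ℝ, ∀ k, dotP (A k) zz ≤ rhs k := by
    rintro ⟨zz, hzz⟩
    apply hdisj
    have hdel : ∀ (l : ι) (z : ι → ℝ), dotP (δ l) z = z l := by
      intro l z
      simp [dotP, hδ, ite_mul, Finset.sum_ite_eq]
    have heq : ∀ l : ι, zz (Sum.inl l) = zz (Sum.inr l) := by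
      intro l
      have h1 := hzz (Sum.inr (Sum.inr (Sum.inl l)))
      have h2 := hzz (Sum.inr (Sum.inr (Sum.inr l)))
      rw [hA, hrhs] at h1 h2
      simp only [Sum.elim_inl, Sum.elim_inr] at h1 h2
      rw [dotP_sum_elim] at h1 h2
      have hneg : ∀ z : ι → ℝ, dotP (-(δ l)) z = -(dotP (δ l) z) := by
        intro z; simp [dotP]
      rw [hneg, hdel, hdel] at h1 h2
      simp only [Function.comp] at h1 h2
      linarith
    refine ⟨zz ∘ Sum.inl, fun k => ?_, fun k => ?_⟩
    · have h1 := hzz (Sum.inl k)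
      rw [hA, hrhs] at h1
      simp only [Sum.elim_inl] at h1
      rw [dotP_sum_elim] at h1
      simpa [dotP] using h1
    · have h1 := hzz (Sum.inr (Sum.inl k))
      rw [hA, hrhs] at h1
      simp only [Sum.elim_inl, Sum.elim_inr] at h1
      rw [dotP_sum_elim] at h1
      have : dotP (a' k) (zz ∘ Sum.inr) ≤ β k := by simpa [dotP] using h1
      have hc : dotP (a' k) (zz ∘ Sum.inl) = dotP (a' k) (zz ∘ Sum.inr) := by
        refine Finset.sum_congr rfl fun i _ => ?_
        simp [Function.comp, heq i]
      rw [← hc] at this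
      exact this
  obtain ⟨l, hl0, hlcomp, hlrhs⟩ := farkas_s10 A rhs hinf
  set l₁ : κ₁ → ℝ := fun k => l (Sum.inl k) with hl₁
  set l₂ : κ₂ → ℝ := fun k => l (Sum.inr (Sum.inl k)) with hl₂
  set η : ι → ℝ := fun i => ∑ k, l₁ k * a k i with hη
  -- component identities
  have hcomp1 : ∀ i, η i + l (Sum.inr (Sum.inr (Sum.inl i)))
      - l (Sum.inr (Sum.inr (Sum.inr i))) = 0 := by
    intro i
    have := hlcomp (Sum.inl i)
    rw [Fintype.sum_sum_type] at this
    rw [Fintype.sum_sum_type] at this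
    rw [Fintype.sum_sum_type] at this
    simp only [hA, Sum.elim_inl, Sum.elim_inr, Pi.neg_apply] at this
    simp only [hδ, Pi.zero_apply, mul_ite, mul_one, mul_zero, mul_neg, Finset.sum_ite_eq, Finset.sum_ite_eq', Finset.sum_const_zero,
      Finset.mem_univ, if_true, Finset.sum_neg_distrib] at this
    simp only [hη, hl₁]
    linarith [this]
  have hcomp2 : ∀ i, (∑ k, l₂ k * a' k i) = -η i := by
    intro i
    have := hlcomp (Sum.inr i)
    rw [Fintype.sum_sum_type] at this
    rw [Fintype.sum_sum_type] at this
    rw [Fintype.sum_sum_type] at this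
    simp only [hA, Sum.elim_inl, Sum.elim_inr, Pi.neg_apply] at this
    simp only [hδ, Pi.zero_apply, mul_ite, mul_one, mul_zero, mul_neg, Finset.sum_ite_eq, Finset.sum_ite_eq', Finset.sum_const_zero,
      Finset.mem_univ, if_true, Finset.sum_neg_distrib] at this
    have h1 := hcomp1 i
    simp only [hl₂]
    linarith [this]
  have hrhssum : (∑ k, l₁ k * α k) + (∑ k, l₂ k * β k) < 0 := by
    rw [Fintype.sum_sum_type] at hlrhs
    rw [Fintype.sum_sum_type] at hlrhs
    rw [Fintype.sum_sum_type] at hlrhs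
    simp only [hrhs, Sum.elim_inl, Sum.elim_inr, mul_zero, Finset.sum_const_zero,
      add_zero] at hlrhs
    exact hlrhs
  refine ⟨η, ∑ k, l₁ k * α k, -(∑ k, l₂ k * β k), by linarith, ?_, ?_⟩
  · intro z hz
    have : dotP η z = ∑ k, l₁ k * dotP (a k) z := dotP_swap l₁ a z
    rw [this]
    exact Finset.sum_le_sum fun k _ =>
      mul_le_mul_of_nonneg_left (hz k) (hl0 (Sum.inl k))
  · intro z hz
    have h2 : dotP (fun i => ∑ k, l₂ k * a' k i) z = ∑ k, l₂ k * dotP (a' k) z :=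
      dotP_swap l₂ a' z
    have h3 : dotP (fun i => ∑ k, l₂ k * a' k i) z = -(dotP η z) := by
      simp only [dotP]
      rw [← Finset.sum_neg_distrib]
      exact Finset.sum_congr rfl fun i _ => by rw [hcomp2 i]; ring
    have h4 : ∑ k, l₂ k * dotP (a' k) z ≤ ∑ k, l₂ k * β k :=
      Finset.sum_le_sum fun k _ =>
        mul_le_mul_of_nonneg_left (hz k) (hl0 (Sum.inr (Sum.inl k)))
    rw [h2] at h3
    linarith

end Sep

section Assemble

lemma dotP_delta {ι : Type*} [Fintype ι] [DecidableEq ι] (i : ι) (z : ι → ℝ) :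
    dotP (fun j => if i = j then 1 else 0) z = z i := by
  simp [dotP, ite_mul, Finset.sum_ite_eq]

lemma lm_eq_sum_coords {ι : Type*} [Fintype ι] [DecidableEq ι]
    (F : (ι → ℝ) →ₗ[ℝ] ℝ) (z : ι → ℝ) :
    F z = dotP (fun i => F (fun j => if i = j then 1 else 0)) z := by
  conv_lhs => rw [pi_eq_sum_univ z, map_sum]
  rw [dotP]
  exact Finset.sum_congr rfl fun i _ => by rw [map_smul]; simp [mul_comm]

/-- Every subspace of a finite-dimensional space is the intersection of the kernels of
finitely many linear functionals. -/
lemma subspace_eq_ker {E : Type*} [AddCommGroup E] [Module ℝ E] [FiniteDimensional ℝ E]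
    (U : Submodule ℝ E) :
    ∃ (r : ℕ) (ψ : Fin r → (E →ₗ[ℝ] ℝ)), ∀ z, (∀ l, ψ l z = 0) ↔ z ∈ U := by
  set Q := E ⧸ U
  set B := Module.finBasis ℝ Q with hB
  refine ⟨Module.finrank ℝ Q, fun l => (B.coord l).comp U.mkQ, fun z => ?_⟩
  constructor
  · intro h
    have : U.mkQ z = 0 := (B.forall_coord_eq_zero_iff).mp fun l => h l
    rwa [Submodule.mkQ_apply, Submodule.Quotient.mk_eq_zero] at this
  · intro hz l
    have h0 : U.mkQ z = 0 := by
      rw [Submodule.mkQ_apply, Submodule.Quotient.mk_eq_zero]; exact hz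
    simp only [LinearMap.comp_apply, h0, map_zero]

end Assemble

lemma dotP_neg {ι : Type*} [Fintype ι] (u z : ι → ℝ) :
    dotP (-u) z = -(dotP u z) := by simp [dotP]

end AuxSep

/-- Strong separation of a polyhedral convex set from a disjoint generalized
polyhedral convex set. -/
theorem strong_separation_pcs_gpcs {X : Type*} [AddCommGroup X] [Module ℝ X] [TopologicalSpace X]
    [IsTopologicalAddGroup X] [ContinuousSMul ℝ X] [LocallyConvexSpace ℝ X] [T2Space X]
    (D₁ D₂ : Set X) (h₁ : IsPCS D₁) (h₂ : IsGPCS D₂)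
    (hne₁ : D₁.Nonempty) (hne₂ : D₂.Nonempty) (hdisj : D₁ ∩ D₂ = ∅) :
    ∃ g : X →L[ℝ] ℝ, sSup (g '' D₁) < sInf (g '' D₂) := by
  classical
  obtain ⟨p, f, α, hD₁⟩ := h₁
  obtain ⟨q, g, β, x₀, W, hWc, hD₂⟩ := h₂
  set T : X →ₗ[ℝ] ((Fin p ⊕ Fin q) → ℝ) :=
    { toFun := fun x => Sum.elim (fun i => f i x) (fun j => g j x)
      map_add' := by intro x y; funext k; cases k <;> simp
      map_smul' := by intro r x; funext k; cases k <;> simp } with hT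
  set U : Submodule ℝ ((Fin p ⊕ Fin q) → ℝ) := W.map T with hU
  set c : (Fin p ⊕ Fin q) → ℝ := T x₀ with hc
  obtain ⟨r, ψ, hψ⟩ := subspace_eq_ker U
  set δ : (Fin p ⊕ Fin q) → (Fin p ⊕ Fin q) → ℝ :=
    fun i => fun j => if i = j then 1 else 0 with hδ
  set uvec : Fin r → ((Fin p ⊕ Fin q) → ℝ) := fun l => fun i => ψ l (δ i) with huvec
  have hψdot : ∀ l z, dotP (uvec l) z = ψ l z := fun l z =>
    (lm_eq_sum_coords (ψ l) z).symm
  set a1 : Fin p → (Fin p ⊕ Fin q) → ℝ := fun k => δ (Sum.inl k) with ha1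
  set a2 : (Fin q ⊕ Fin r ⊕ Fin r) → (Fin p ⊕ Fin q) → ℝ :=
    fun k => Sum.elim (fun j => δ (Sum.inr j))
      (Sum.elim uvec (fun l => -(uvec l))) k with ha2
  set b2 : (Fin q ⊕ Fin r ⊕ Fin r) → ℝ :=
    fun k => Sum.elim β (Sum.elim (fun l => ψ l c) (fun l => -(ψ l c))) k with hb2
  have hdotδ : ∀ (k : Fin p ⊕ Fin q) z, dotP (δ k) z = z k := by
    intro k z; exact dotP_delta k z
  have hdot1 : ∀ (k : Fin p) z, dotP (a1 k) z = z (Sum.inl k) := by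
    intro k z; rw [ha1]; exact dotP_delta (Sum.inl k) z
  have hfeas2 : ∀ z, (∀ k, dotP (a2 k) z ≤ b2 k) ↔
      ((∀ j, z (Sum.inr j) ≤ β j) ∧ z - c ∈ U) := by
    intro z
    constructor
    · intro h
      refine ⟨fun j => ?_, ?_⟩
      · have := h (Sum.inl j)
        rw [ha2, hb2] at this
        simp only [Sum.elim_inl] at this
        rwa [hdotδ] at this
      · rw [← hψ]
        intro l
        have h1 := h (Sum.inr (Sum.inl l))
        have h2 := h (Sum.inr (Sum.inr l))
        rw [ha2, hb2] at h1 h2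
        simp only [Sum.elim_inl, Sum.elim_inr] at h1 h2
        rw [hψdot] at h1
        rw [dotP_neg, hψdot] at h2
        rw [map_sub]
        linarith
    · rintro ⟨hg, hU'⟩
      have hval : ∀ l, ψ l z = ψ l c := by
        intro l
        have := (hψ (z - c)).mpr hU' l
        rw [map_sub] at this
        linarith
      intro k
      rcases k with j | (l | l)
      · rw [ha2, hb2]
        simp only [Sum.elim_inl]
        rw [hdotδ]
        exact hg j
      · rw [ha2, hb2]
        simp only [Sum.elim_inl, Sum.elim_inr]
        rw [hψdot, hval l]
      · rw [ha2, hb2]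
        simp only [Sum.elim_inl, Sum.elim_inr]
        rw [dotP_neg, hψdot, hval l]
  have hinf : ¬ ∃ z, (∀ k, dotP (a1 k) z ≤ α k) ∧ (∀ k, dotP (a2 k) z ≤ b2 k) := by
    rintro ⟨z, hz1, hz2⟩
    rw [hfeas2] at hz2
    obtain ⟨hzg, hzU⟩ := hz2
    obtain ⟨w, hw, hTw⟩ := Submodule.mem_map.mp hzU
    set x := x₀ + w with hx
    have hTx : T x = z := by
      rw [hx, map_add, ← hc, hTw]
      abel
    have hx1 : x ∈ D₁ := by
      rw [hD₁]
      intro i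
      have := hz1 i
      rw [hdot1] at this
      have hfx : f i x = z (Sum.inl i) := by rw [← hTx]; rfl
      rw [hfx]; exact this
    have hx2 : x ∈ D₂ := by
      rw [hD₂]
      refine ⟨⟨w, hw, ?_⟩, fun j => ?_⟩
      · rfl
      · have hgx : g j x = z (Sum.inr j) := by rw [← hTx]; rfl
        rw [hgx]; exact hzg j
    have : x ∈ D₁ ∩ D₂ := ⟨hx1, hx2⟩
    rw [hdisj] at this
    exact this
  obtain ⟨η, γ, γ', hγ, hP, hQ⟩ := polyhedra_sep a1 α a2 b2 hinf
  set G : X →L[ℝ] ℝ :=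
    (∑ i : Fin p, η (Sum.inl i) • f i) + (∑ j : Fin q, η (Sum.inr j) • g j) with hG
  have hGval : ∀ x, G x = dotP η (T x) := by
    intro x
    rw [hG]
    simp only [ContinuousLinearMap.add_apply, ContinuousLinearMap.coe_sum',
      Finset.sum_apply, ContinuousLinearMap.coe_smul', Pi.smul_apply, smul_eq_mul]
    rw [dotP, Fintype.sum_sum_type]
    rfl
  refine ⟨G, ?_⟩
  have hub : sSup (G '' D₁) ≤ γ := by
    apply csSup_le (hne₁.image G)
    rintro y ⟨x, hx, rfl⟩
    rw [hGval]
    apply hP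
    intro k
    rw [hdot1]
    have : f k x ≤ α k := by rw [hD₁] at hx; exact hx k
    exact this
  have hlb : γ' ≤ sInf (G '' D₂) := by
    apply le_csInf (hne₂.image G)
    rintro y ⟨x, hx, rfl⟩
    rw [hGval]
    apply hQ
    rw [hfeas2]
    rw [hD₂] at hx
    obtain ⟨⟨w, hw, hwx⟩, hgx⟩ := hx
    constructor
    · intro j
      have : g j x ≤ β j := hgx j
      exact this
    · refine Submodule.mem_map.mpr ⟨w, hw, ?_⟩
      rw [← hwx]
      show T w = T (x₀ + w) - T x₀
      rw [map_add]; abel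
  linarith
end
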